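/- arXiv:0808.3037 — 3 statements merged into one kernel-verified Lean document; each statement's English description precedes it below -/
import Mathlib

section
/- For every n ≥ 1, E[((Σ_{j=1}^n ω_j)² − Σ_{j=1}^n ω_j²)²] = 2n(n−1). Moreover, there is a constant C > 0 such that for all integers n ≥ 1 and m ≥ 2, E[|(Σ_{j=1}^n ω_j)² − Σ_{j=1}^n ω_j²|^m] ≤ m! (C n(n−1))^{m/2}. -/
open MeasureTheory ProbabilityTheory Filter Real

section Aux

set_option linter.unusedSectionVars false

lemma pow_le_factorial_mul_exp {x : ℝ} (hx : 0 ≤ x) (n : ℕ) :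
    x ^ n ≤ n.factorial * Real.exp x := by
  have h2 : x ^ n / n.factorial ≤ ∑ i ∈ Finset.range (n + 1), x ^ i / i.factorial :=
    Finset.single_le_sum (f := fun i => x ^ i / (i.factorial : ℝ))
      (fun i _ => by positivity) (Finset.self_mem_range_succ n)
  have h := h2.trans (Real.sum_le_exp_of_nonneg hx (n + 1))
  rw [div_le_iff₀ (by positivity)] at h
  linarith [h]

lemma abs_add_pow_le (a b : ℝ) (k : ℕ) : |a + b| ^ k ≤ 2 ^ k * (|a| ^ k + |b| ^ k) := by
  have h1 : |a + b| ≤ 2 * max |a| |b| := by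
    rcases le_total |a| |b| with h | h
    · calc |a + b| ≤ |a| + |b| := abs_add_le a b
        _ ≤ 2 * max |a| |b| := by rw [max_eq_right h]; linarith
    · calc |a + b| ≤ |a| + |b| := abs_add_le a b
        _ ≤ 2 * max |a| |b| := by rw [max_eq_left h]; linarith
  calc |a + b| ^ k ≤ (2 * max |a| |b|) ^ k :=
        pow_le_pow_left₀ (abs_nonneg _) h1 k
    _ = 2 ^ k * max |a| |b| ^ k := mul_pow 2 _ k
    _ ≤ 2 ^ k * (|a| ^ k + |b| ^ k) := by
        gcongr
        rcases max_cases |a| |b| with ⟨h, _⟩ | ⟨h, _⟩ <;> rw [h] <;>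
          [linarith [pow_nonneg (abs_nonneg b) k]; linarith [pow_nonneg (abs_nonneg a) k]]

lemma abs_mul_pow_le (a b : ℝ) (k : ℕ) :
    |a * b| ^ k ≤ |a| ^ (2 * k) + |b| ^ (2 * k) := by
  have h : |a * b| ^ k = |a| ^ k * |b| ^ k := by rw [abs_mul, mul_pow]
  have h2 : |a| ^ k * |b| ^ k ≤ (|a| ^ k) ^ 2 + (|b| ^ k) ^ 2 := by
    nlinarith [sq_nonneg (|a| ^ k - |b| ^ k), pow_nonneg (abs_nonneg a) k,
      pow_nonneg (abs_nonneg b) k]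
  rw [h]
  calc |a| ^ k * |b| ^ k ≤ (|a| ^ k) ^ 2 + (|b| ^ k) ^ 2 := h2
    _ = |a| ^ (2 * k) + |b| ^ (2 * k) := by rw [← pow_mul, ← pow_mul, mul_comm k 2]

variable {Ω : Type*} [MeasurableSpace Ω] {μ : Measure Ω} [IsFiniteMeasure μ] {f g : Ω → ℝ}

/-- A function all of whose absolute moments are finite. -/
def Nice (μ : Measure Ω) (f : Ω → ℝ) : Prop :=
  Measurable f ∧ ∀ k : ℕ, Integrable (fun ω => |f ω| ^ k) μ

lemma Nice.meas (h : Nice μ f) : Measurable f := h.1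

lemma Nice.integrable_pow (h : Nice μ f) (k : ℕ) :
    Integrable (fun ω => f ω ^ k) μ := by
  refine (h.2 k).mono' ((h.1.pow_const k).aestronglyMeasurable) ?_
  filter_upwards with ω
  rw [Real.norm_eq_abs, abs_pow]

lemma Nice.integrable (h : Nice μ f) : Integrable f μ := by
  have := h.integrable_pow 1
  simpa using this

lemma Nice.const (c : ℝ) : Nice μ (fun _ => c) :=
  ⟨measurable_const, fun k => integrable_const _⟩

lemma Nice.add (hf : Nice μ f) (hg : Nice μ g) : Nice μ (fun ω => f ω + g ω) := by
  refine ⟨hf.1.add hg.1, fun k => ?_⟩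
  refine (((hf.2 k).add (hg.2 k)).const_mul ((2:ℝ)^k)).mono'
    (((hf.1.add hg.1).abs.pow_const k).aestronglyMeasurable) ?_
  filter_upwards with ω
  rw [Real.norm_eq_abs, abs_pow, abs_abs, Pi.add_apply]
  exact abs_add_pow_le _ _ k

lemma Nice.mul (hf : Nice μ f) (hg : Nice μ g) : Nice μ (fun ω => f ω * g ω) := by
  refine ⟨hf.1.mul hg.1, fun k => ?_⟩
  refine ((hf.2 (2 * k)).add (hg.2 (2 * k))).mono'
    (((hf.1.mul hg.1).abs.pow_const k).aestronglyMeasurable) ?_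
  filter_upwards with ω
  rw [Real.norm_eq_abs, abs_pow, abs_abs]
  exact abs_mul_pow_le _ _ k

lemma Nice.neg (hf : Nice μ f) : Nice μ (fun ω => -f ω) := by
  refine ⟨hf.1.neg, fun k => ?_⟩
  simpa [abs_neg] using hf.2 k

lemma Nice.sub (hf : Nice μ f) (hg : Nice μ g) : Nice μ (fun ω => f ω - g ω) := by
  simpa [sub_eq_add_neg] using hf.add hg.neg

lemma Nice.pow (hf : Nice μ f) (j : ℕ) : Nice μ (fun ω => f ω ^ j) := by
  induction j with
  | zero => simpa using Nice.const (μ := μ) 1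
  | succ j ih =>
      have := ih.mul hf
      simpa [pow_succ] using this

lemma Nice.finset_sum {ι : Type*} {s : Finset ι} {F : ι → Ω → ℝ}
    (h : ∀ i ∈ s, Nice μ (F i)) : Nice μ (fun ω => ∑ i ∈ s, F i ω) := by
  classical
  induction s using Finset.induction_on with
  | empty => simpa using Nice.const (μ := μ) 0
  | insert a s hnot ih =>
      have h1 : Nice μ (F a) := h a (Finset.mem_insert_self a s)
      have h2 : Nice μ (fun ω => ∑ i ∈ s, F i ω) :=
        ih fun i hi => h i (Finset.mem_insert_of_mem hi)
      have := h1.add h2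
      simpa [Finset.sum_insert hnot] using this

end Aux
section Aux2
set_option linter.unusedSectionVars false
variable {Ω : Type*} [MeasurableSpace Ω] {μ : Measure Ω} [IsProbabilityMeasure μ]
  {W : ℕ → Ω → ℝ}

lemma integral_comp_W (hWmeas : ∀ i, Measurable (W i))
    (hWident : ∀ i, Measure.map (W i) μ = Measure.map (W 1) μ)
    (i : ℕ) {f : ℝ → ℝ} (hf : Measurable f) :
    ∫ ω, f (W i ω) ∂μ = ∫ ω, f (W 1 ω) ∂μ := by
  rw [← integral_map (hWmeas i).aemeasurable hf.aestronglyMeasurable, hWident i,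
      integral_map (hWmeas 1).aemeasurable hf.aestronglyMeasurable]

lemma integrable_comp_W (hWmeas : ∀ i, Measurable (W i))
    (hWident : ∀ i, Measure.map (W i) μ = Measure.map (W 1) μ)
    (i : ℕ) {f : ℝ → ℝ} (hf : Measurable f)
    (h1 : Integrable (fun ω => f (W 1 ω)) μ) : Integrable (fun ω => f (W i ω)) μ := by
  have h1' : Integrable (f ∘ W 1) μ := h1
  rw [← integrable_map_measure hf.aestronglyMeasurable (hWmeas 1).aemeasurable] at h1'
  rw [← hWident i, integrable_map_measure hf.aestronglyMeasurable (hWmeas i).aemeasurable] at h1'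
  exact h1'

lemma integral_symm_W (hWmeas : ∀ i, Measurable (W i))
    (hWsymm : Measure.map (W 1) μ = Measure.map (fun ω => -(W 1 ω)) μ)
    {f : ℝ → ℝ} (hf : Measurable f) :
    ∫ ω, f (W 1 ω) ∂μ = ∫ ω, f (-(W 1 ω)) ∂μ := by
  rw [← integral_map (hWmeas 1).aemeasurable hf.aestronglyMeasurable, hWsymm,
      integral_map (φ := fun ω => -(W 1 ω)) ((hWmeas 1).neg).aemeasurable hf.aestronglyMeasurable]

lemma indep_block (hWindep : iIndepFun W μ)
    (hWmeas : ∀ i, Measurable (W i))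
    {n j : ℕ} (hj : n < j) (φ : ℝ → ℝ) (hφ : Measurable φ)
    (ψ : (((Finset.Icc 1 n : Finset ℕ) : Type) → ℝ) → ℝ) (hψ : Measurable ψ) :
    IndepFun (fun ω => φ (W j ω)) (fun ω => ψ (fun i => W i ω)) μ := by
  have hd : Disjoint ({j} : Finset ℕ) (Finset.Icc 1 n) := by
    simp only [Finset.disjoint_singleton_left, Finset.mem_Icc]; omega
  have h := hWindep.indepFun_finset {j} (Finset.Icc 1 n) hd hWmeas
  have h2 := h.comp
    (show Measurable fun v : (({j} : Finset ℕ) : Type) → ℝ =>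
        φ (v ⟨j, Finset.mem_singleton_self j⟩) from hφ.comp (measurable_pi_apply _)) hψ
  exact h2

lemma integral_mul_block (hWindep : iIndepFun W μ)
    (hWmeas : ∀ i, Measurable (W i))
    {n j : ℕ} (hj : n < j) {φ : ℝ → ℝ} (hφ : Measurable φ)
    {ψ : (((Finset.Icc 1 n : Finset ℕ) : Type) → ℝ) → ℝ} (hψ : Measurable ψ)
    (hφi : Integrable (fun ω => φ (W j ω)) μ)
    (hψi : Integrable (fun ω => ψ (fun i => W i ω)) μ) :
    ∫ ω, φ (W j ω) * ψ (fun i => W i ω) ∂μ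
      = (∫ ω, φ (W j ω) ∂μ) * ∫ ω, ψ (fun i => W i ω) ∂μ :=
  (indep_block hWindep hWmeas hj φ hφ ψ hψ).integral_fun_mul_eq_mul_integral
    hφi.aestronglyMeasurable hψi.aestronglyMeasurable

end Aux2
section Part1
set_option linter.unusedSectionVars false
set_option maxHeartbeats 1000000
variable {Ω : Type*} [MeasurableSpace Ω] {μ : Measure Ω} [IsProbabilityMeasure μ]
  {W : ℕ → Ω → ℝ}

lemma niceW_of_exp (hWmeas : ∀ i, Measurable (W i))
    (hWident : ∀ i, Measure.map (W i) μ = Measure.map (W 1) μ)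
    {l0 : ℝ} (hl0 : 0 < l0)
    (hexp1 : Integrable (fun ω => Real.exp (l0 * (W 1 ω) ^ 2)) μ)
    (i : ℕ) : Nice μ (W i) := by
  have hexpi : Integrable (fun ω => Real.exp (l0 * (W i ω) ^ 2)) μ :=
    integrable_comp_W hWmeas hWident i (f := fun x => Real.exp (l0 * x ^ 2))
      (((measurable_id.pow_const 2).const_mul l0).exp) hexp1
  refine ⟨hWmeas i, fun k => ?_⟩
  have hb : Integrable
      (fun ω => 1 + (k.factorial : ℝ) / l0 ^ k * Real.exp (l0 * (W i ω) ^ 2)) μ :=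
    (integrable_const 1).add (hexpi.const_mul _)
  refine hb.mono' (((hWmeas i).abs.pow_const k).aestronglyMeasurable) ?_
  filter_upwards with ω
  rw [Real.norm_eq_abs, abs_pow, abs_abs]
  set x := W i ω with hx
  have key1 : |x| ^ k ≤ 1 + (x ^ 2) ^ k := by
    rcases le_total |x| 1 with h | h
    · have h1 : |x| ^ k ≤ 1 := pow_le_one₀ (abs_nonneg x) h
      have h0 : (0:ℝ) ≤ (x ^ 2) ^ k := by positivity
      linarith
    · have hx2 : |x| ≤ x ^ 2 := by nlinarith [sq_abs x, abs_nonneg x]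
      have h1 := pow_le_pow_left₀ (abs_nonneg x) hx2 k
      linarith
  have key2 : (x ^ 2) ^ k ≤ (k.factorial : ℝ) / l0 ^ k * Real.exp (l0 * x ^ 2) := by
    have h := pow_le_factorial_mul_exp (x := l0 * x ^ 2) (by positivity) k
    rw [mul_pow] at h
    rw [div_mul_eq_mul_div, le_div_iff₀ (by positivity)]
    calc (x ^ 2) ^ k * l0 ^ k = l0 ^ k * (x ^ 2) ^ k := by ring
      _ ≤ (k.factorial : ℝ) * Real.exp (l0 * x ^ 2) := h
  linarith

lemma EW_zero (hWmeas : ∀ i, Measurable (W i))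
    (hWident : ∀ i, Measure.map (W i) μ = Measure.map (W 1) μ)
    (hWsymm : Measure.map (W 1) μ = Measure.map (fun ω => -(W 1 ω)) μ)
    (i : ℕ) : ∫ ω, W i ω ∂μ = 0 := by
  have h1 : ∫ ω, W i ω ∂μ = ∫ ω, W 1 ω ∂μ :=
    integral_comp_W hWmeas hWident i (f := fun x => x) measurable_id
  have h2 : ∫ ω, W 1 ω ∂μ = ∫ ω, -(W 1 ω) ∂μ :=
    integral_symm_W hWmeas hWsymm (f := fun x => x) measurable_id
  rw [integral_neg] at h2
  linarith

lemma part1_main (hWmeas : ∀ i, Measurable (W i))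
    (hWindep : iIndepFun W μ)
    (hWident : ∀ i, Measure.map (W i) μ = Measure.map (W 1) μ)
    (hWsymm : Measure.map (W 1) μ = Measure.map (fun ω => -(W 1 ω)) μ)
    (hWmom : ∫ ω, (W 1 ω) ^ 2 ∂μ = 1)
    {l0 : ℝ} (hl0 : 0 < l0)
    (hexp1 : Integrable (fun ω => Real.exp (l0 * (W 1 ω) ^ 2)) μ) :
    ∀ n : ℕ,
      ∫ ω, ((∑ j ∈ Finset.Icc 1 n, W j ω) ^ 2 - ∑ j ∈ Finset.Icc 1 n, (W j ω) ^ 2) ^ 2 ∂μ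
        = 2 * (n : ℝ) * ((n : ℝ) - 1) := by
  have niceW : ∀ i, Nice μ (W i) := niceW_of_exp hWmeas hWident hl0 hexp1
  have EW : ∀ i, ∫ ω, W i ω ∂μ = 0 := EW_zero hWmeas hWident hWsymm
  have EW2 : ∀ i, ∫ ω, (W i ω) ^ 2 ∂μ = 1 := fun i => by
    rw [integral_comp_W hWmeas hWident i (f := fun x => x ^ 2) (measurable_id.pow_const 2)]
    exact hWmom
  have nS : ∀ n, Nice μ (fun ω => ∑ j ∈ Finset.Icc 1 n, W j ω) :=
    fun n => Nice.finset_sum (fun i _ => niceW i)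
  have nQ : ∀ n, Nice μ (fun ω => ∑ j ∈ Finset.Icc 1 n, (W j ω) ^ 2) :=
    fun n => Nice.finset_sum (fun i _ => (niceW i).pow 2)
  have nY : ∀ n, Nice μ (fun ω =>
      (∑ j ∈ Finset.Icc 1 n, W j ω) ^ 2 - ∑ j ∈ Finset.Icc 1 n, (W j ω) ^ 2) :=
    fun n => ((nS n).pow 2).sub (nQ n)
  -- measurable sum-functionals on the block
  have hψ1 : ∀ n : ℕ, Measurable (fun v : ((Finset.Icc 1 n : Finset ℕ) : Type) → ℝ =>
      ∑ i, v i) := fun n => Finset.measurable_sum Finset.univ (fun i _ => measurable_pi_apply i)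
  have hψq : ∀ n : ℕ, Measurable (fun v : ((Finset.Icc 1 n : Finset ℕ) : Type) → ℝ =>
      ∑ i, (v i) ^ 2) :=
    fun n => Finset.measurable_sum Finset.univ (fun i _ => (measurable_pi_apply i).pow_const 2)
  have eS : ∀ (n : ℕ) (ω : Ω),
      (∑ x ∈ (Finset.Icc 1 n).attach, W (↑x) ω) = ∑ j ∈ Finset.Icc 1 n, W j ω :=
    fun n ω => Finset.sum_attach (Finset.Icc 1 n) (fun j => W j ω)
  have eQ : ∀ (n : ℕ) (ω : Ω),
      (∑ x ∈ (Finset.Icc 1 n).attach, (W (↑x) ω) ^ 2) = ∑ j ∈ Finset.Icc 1 n, (W j ω) ^ 2 :=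
    fun n ω => Finset.sum_attach (Finset.Icc 1 n) (fun j => (W j ω) ^ 2)
  -- cross moments
  have hWS : ∀ n : ℕ, ∫ ω, W (n+1) ω * (∑ j ∈ Finset.Icc 1 n, W j ω) ∂μ = 0 := by
    intro n
    have h := integral_mul_block hWindep hWmeas (show n < n + 1 by omega)
      (φ := fun x => x) measurable_id (ψ := fun v => ∑ i, v i) (hψ1 n)
      ((niceW (n+1)).integrable)
      (by simp only [Finset.univ_eq_attach, eS, eQ]; exact (nS n).integrable)
    simp only [Finset.univ_eq_attach, eS, eQ] at h
    rw [h, EW (n+1), zero_mul]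
  have hW2S2 : ∀ n : ℕ, ∫ ω, (W (n+1) ω) ^ 2 * (∑ j ∈ Finset.Icc 1 n, W j ω) ^ 2 ∂μ
      = ∫ ω, (∑ j ∈ Finset.Icc 1 n, W j ω) ^ 2 ∂μ := by
    intro n
    have h := integral_mul_block hWindep hWmeas (show n < n + 1 by omega)
      (φ := fun x => x ^ 2) (measurable_id.pow_const 2)
      (ψ := fun v => (∑ i, v i) ^ 2) ((hψ1 n).pow_const 2)
      ((niceW (n+1)).integrable_pow 2)
      (by simp only [Finset.univ_eq_attach, eS, eQ]; exact (nS n).integrable_pow 2)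
    simp only [Finset.univ_eq_attach, eS, eQ] at h
    rw [h, EW2 (n+1), one_mul]
  have hWSY : ∀ n : ℕ, ∫ ω, W (n+1) ω * ((∑ j ∈ Finset.Icc 1 n, W j ω) *
      ((∑ j ∈ Finset.Icc 1 n, W j ω) ^ 2 - ∑ j ∈ Finset.Icc 1 n, (W j ω) ^ 2)) ∂μ = 0 := by
    intro n
    have h := integral_mul_block hWindep hWmeas (show n < n + 1 by omega)
      (φ := fun x => x) measurable_id
      (ψ := fun v => (∑ i, v i) * ((∑ i, v i) ^ 2 - ∑ i, (v i) ^ 2))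
      ((hψ1 n).mul (((hψ1 n).pow_const 2).sub (hψq n)))
      ((niceW (n+1)).integrable)
      (by simp only [Finset.univ_eq_attach, eS, eQ]; exact ((nS n).mul (nY n)).integrable)
    simp only [Finset.univ_eq_attach, eS, eQ] at h
    rw [h, EW (n+1), zero_mul]
  -- second moment of partial sums
  have ES2 : ∀ n : ℕ, ∫ ω, (∑ j ∈ Finset.Icc 1 n, W j ω) ^ 2 ∂μ = n := by
    intro n
    induction n with
    | zero => simp
    | succ n ih =>
      have hexp : (fun ω => (∑ j ∈ Finset.Icc 1 (n+1), W j ω) ^ 2)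
          = fun ω => (∑ j ∈ Finset.Icc 1 n, W j ω) ^ 2 +
              (2 * (W (n+1) ω * (∑ j ∈ Finset.Icc 1 n, W j ω)) + (W (n+1) ω) ^ 2) := by
        funext ω
        rw [Finset.sum_Icc_succ_top (by omega : 1 ≤ n + 1)]
        ring
      rw [show (∫ ω, (∑ j ∈ Finset.Icc 1 (n+1), W j ω) ^ 2 ∂μ)
          = ∫ ω, ((∑ j ∈ Finset.Icc 1 n, W j ω) ^ 2 +
              (2 * (W (n+1) ω * (∑ j ∈ Finset.Icc 1 n, W j ω)) + (W (n+1) ω) ^ 2)) ∂μ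
        from by rw [← hexp]]
      have iS2 : Integrable (fun ω => (∑ j ∈ Finset.Icc 1 n, W j ω) ^ 2) μ :=
        (nS n).integrable_pow 2
      have iC : Integrable
          (fun ω => 2 * (W (n+1) ω * (∑ j ∈ Finset.Icc 1 n, W j ω))) μ :=
        (((niceW (n+1)).mul (nS n)).integrable).const_mul 2
      have iW2 : Integrable (fun ω => (W (n+1) ω) ^ 2) μ := (niceW (n+1)).integrable_pow 2
      have iCW : Integrable (fun ω =>
          2 * (W (n+1) ω * (∑ j ∈ Finset.Icc 1 n, W j ω)) + (W (n+1) ω) ^ 2) μ :=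
        iC.add iW2
      rw [integral_add iS2 iCW, integral_add iC iW2,
        integral_const_mul, hWS n, EW2 (n+1), ih]
      push_cast
      ring
  -- main induction
  intro n
  induction n with
  | zero => simp
  | succ n ih =>
    have hstepS : ∀ ω, ∑ j ∈ Finset.Icc 1 (n+1), W j ω
        = (∑ j ∈ Finset.Icc 1 n, W j ω) + W (n+1) ω :=
      fun ω => Finset.sum_Icc_succ_top (by omega) _
    have hstepQ : ∀ ω, ∑ j ∈ Finset.Icc 1 (n+1), (W j ω) ^ 2
        = (∑ j ∈ Finset.Icc 1 n, (W j ω) ^ 2) + (W (n+1) ω) ^ 2 :=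
      fun ω => Finset.sum_Icc_succ_top (by omega) _
    have hexp : (fun ω => ((∑ j ∈ Finset.Icc 1 (n+1), W j ω) ^ 2
          - ∑ j ∈ Finset.Icc 1 (n+1), (W j ω) ^ 2) ^ 2)
        = fun ω => ((∑ j ∈ Finset.Icc 1 n, W j ω) ^ 2
              - ∑ j ∈ Finset.Icc 1 n, (W j ω) ^ 2) ^ 2 +
            (4 * (W (n+1) ω * ((∑ j ∈ Finset.Icc 1 n, W j ω) *
                ((∑ j ∈ Finset.Icc 1 n, W j ω) ^ 2 - ∑ j ∈ Finset.Icc 1 n, (W j ω) ^ 2))) +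
             4 * ((W (n+1) ω) ^ 2 * (∑ j ∈ Finset.Icc 1 n, W j ω) ^ 2)) := by
      funext ω
      rw [hstepS ω, hstepQ ω]
      ring
    have intY2 : Integrable (fun ω => ((∑ j ∈ Finset.Icc 1 n, W j ω) ^ 2
        - ∑ j ∈ Finset.Icc 1 n, (W j ω) ^ 2) ^ 2) μ := (nY n).integrable_pow 2
    have intWSY : Integrable (fun ω => W (n+1) ω * ((∑ j ∈ Finset.Icc 1 n, W j ω) *
        ((∑ j ∈ Finset.Icc 1 n, W j ω) ^ 2 - ∑ j ∈ Finset.Icc 1 n, (W j ω) ^ 2))) μ :=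
      ((niceW (n+1)).mul ((nS n).mul (nY n))).integrable
    have intW2S2 : Integrable (fun ω =>
        (W (n+1) ω) ^ 2 * (∑ j ∈ Finset.Icc 1 n, W j ω) ^ 2) μ :=
      (((niceW (n+1)).pow 2).mul ((nS n).pow 2)).integrable
    rw [show (∫ ω, ((∑ j ∈ Finset.Icc 1 (n+1), W j ω) ^ 2
          - ∑ j ∈ Finset.Icc 1 (n+1), (W j ω) ^ 2) ^ 2 ∂μ)
        = ∫ ω, (((∑ j ∈ Finset.Icc 1 n, W j ω) ^ 2
              - ∑ j ∈ Finset.Icc 1 n, (W j ω) ^ 2) ^ 2 +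
            (4 * (W (n+1) ω * ((∑ j ∈ Finset.Icc 1 n, W j ω) *
                ((∑ j ∈ Finset.Icc 1 n, W j ω) ^ 2 - ∑ j ∈ Finset.Icc 1 n, (W j ω) ^ 2))) +
             4 * ((W (n+1) ω) ^ 2 * (∑ j ∈ Finset.Icc 1 n, W j ω) ^ 2))) ∂μ
        from by rw [← hexp]]
    have i1 : Integrable (fun ω => 4 * (W (n+1) ω * ((∑ j ∈ Finset.Icc 1 n, W j ω) *
        ((∑ j ∈ Finset.Icc 1 n, W j ω) ^ 2 - ∑ j ∈ Finset.Icc 1 n, (W j ω) ^ 2)))) μ :=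
      intWSY.const_mul 4
    have i2 : Integrable (fun ω =>
        4 * ((W (n+1) ω) ^ 2 * (∑ j ∈ Finset.Icc 1 n, W j ω) ^ 2)) μ :=
      intW2S2.const_mul 4
    have i12 : Integrable (fun ω => 4 * (W (n+1) ω * ((∑ j ∈ Finset.Icc 1 n, W j ω) *
        ((∑ j ∈ Finset.Icc 1 n, W j ω) ^ 2 - ∑ j ∈ Finset.Icc 1 n, (W j ω) ^ 2))) +
        4 * ((W (n+1) ω) ^ 2 * (∑ j ∈ Finset.Icc 1 n, W j ω) ^ 2)) μ := i1.add i2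
    rw [integral_add intY2 i12, integral_add i1 i2,
      integral_const_mul, integral_const_mul, hWSY n, hW2S2 n, ES2 n, ih]
    push_cast
    ring

end Part1
section Part2
set_option linter.unusedSectionVars false
set_option maxHeartbeats 1000000
variable {Ω : Type*} [MeasurableSpace Ω] {μ : Measure Ω} [IsProbabilityMeasure μ]
  {W : ℕ → Ω → ℝ}

lemma int_exp_tW (hWmeas : ∀ i, Measurable (W i))
    (hWident : ∀ i, Measure.map (W i) μ = Measure.map (W 1) μ)
    {l0 : ℝ} (hl0 : 0 < l0)
    (hexp1 : Integrable (fun ω => Real.exp (l0 * (W 1 ω) ^ 2)) μ)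
    (i : ℕ) (t : ℝ) : Integrable (fun ω => Real.exp (t * W i ω)) μ := by
  have hexpi : Integrable (fun ω => Real.exp (l0 * (W i ω) ^ 2)) μ :=
    integrable_comp_W hWmeas hWident i (f := fun x => Real.exp (l0 * x ^ 2))
      (((measurable_id.pow_const 2).const_mul l0).exp) hexp1
  refine (hexpi.const_mul (Real.exp (t ^ 2 / (4 * l0)))).mono'
    (((hWmeas i).const_mul t).exp.aestronglyMeasurable) ?_
  filter_upwards with ω
  rw [Real.norm_eq_abs, abs_of_pos (Real.exp_pos _), ← Real.exp_add]
  apply Real.exp_le_exp.mpr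
  rw [← sub_nonneg]
  have h : t ^ 2 / (4 * l0) + l0 * W i ω ^ 2 - t * W i ω
      = (t - 2 * l0 * W i ω) ^ 2 / (4 * l0) := by field_simp; ring
  rw [h]; positivity

lemma K_ge_one {l0 : ℝ} (hl0 : 0 < l0)
    (hexp1 : Integrable (fun ω => Real.exp (l0 * (W 1 ω) ^ 2)) μ) :
    1 ≤ ∫ ω, Real.exp (l0 * (W 1 ω) ^ 2) ∂μ := by
  have h := integral_mono (integrable_const 1) hexp1 (fun ω => by
    have : (0:ℝ) ≤ l0 * (W 1 ω) ^ 2 := by positivity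
    linarith [Real.add_one_le_exp (l0 * (W 1 ω) ^ 2)])
  simpa using h

lemma mgfW_le (hWmeas : ∀ i, Measurable (W i))
    (hWident : ∀ i, Measure.map (W i) μ = Measure.map (W 1) μ)
    (hWsymm : Measure.map (W 1) μ = Measure.map (fun ω => -(W 1 ω)) μ)
    {l0 : ℝ} (hl0 : 0 < l0)
    (hexp1 : Integrable (fun ω => Real.exp (l0 * (W 1 ω) ^ 2)) μ)
    (i : ℕ) (t : ℝ) :
    ∫ ω, Real.exp (t * W i ω) ∂μ
      ≤ Real.exp ((((∫ ω, Real.exp (l0 * (W 1 ω) ^ 2) ∂μ) - 1) / (2 * l0)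
          + 1 / (4 * l0)) * t ^ 2) := by
  set K := ∫ ω, Real.exp (l0 * (W 1 ω) ^ 2) ∂μ with hKdef
  have hK1 : 1 ≤ K := K_ge_one hl0 hexp1
  set c := (K - 1) / (2 * l0) + 1 / (4 * l0) with hcdef
  have hred : ∫ ω, Real.exp (t * W i ω) ∂μ = ∫ ω, Real.exp (t * W 1 ω) ∂μ :=
    integral_comp_W hWmeas hWident i (f := fun x => Real.exp (t * x))
      ((measurable_id.const_mul t).exp)
  rw [hred]
  rcases le_total (t ^ 2) (2 * l0) with hcase | hcase
  · -- small t : symmetrization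
    set θ := t ^ 2 / (2 * l0) with hθdef
    have hθ0 : 0 ≤ θ := by positivity
    have hθ1 : θ ≤ 1 := by rw [hθdef, div_le_one (by positivity)]; exact hcase
    have hsym : ∫ ω, Real.exp (t * W 1 ω) ∂μ = ∫ ω, Real.exp (t * -(W 1 ω)) ∂μ :=
      integral_symm_W hWmeas hWsymm (f := fun x => Real.exp (t * x))
        ((measurable_id.const_mul t).exp)
    have hint1 : Integrable (fun ω => Real.exp (t * W 1 ω)) μ :=
      int_exp_tW hWmeas hWident hl0 hexp1 1 t
    have hint2 : Integrable (fun ω => Real.exp (t * -(W 1 ω))) μ := by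
      have := int_exp_tW hWmeas hWident hl0 hexp1 1 (-t)
      simpa [neg_mul, mul_neg] using this
    -- pointwise bound on the symmetrized integrand
    have hpt : ∀ ω, (Real.exp (t * W 1 ω) + Real.exp (t * -(W 1 ω))) / 2
        ≤ (1 - θ) + θ * Real.exp (l0 * (W 1 ω) ^ 2) := by
      intro ω
      set x := W 1 ω
      have hcosh : (Real.exp (t * x) + Real.exp (t * -x)) / 2 = Real.cosh (t * x) := by
        rw [Real.cosh_eq, mul_neg]
      rw [hcosh]
      have h1 : Real.cosh (t * x) ≤ Real.exp ((t * x) ^ 2 / 2) := Real.cosh_le_exp_half_sq _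
      have h2 : (t * x) ^ 2 / 2 = θ * (l0 * x ^ 2) := by
        rw [hθdef]; field_simp
      have h3 : Real.exp (θ * (l0 * x ^ 2)) ≤ (1 - θ) + θ * Real.exp (l0 * x ^ 2) := by
        have hrw : Real.exp (θ * (l0 * x ^ 2)) = Real.exp (l0 * x ^ 2) ^ θ := by
          rw [mul_comm θ _, Real.exp_mul]
        rw [hrw]
        have := Real.geom_mean_le_arith_mean2_weighted (w₁ := 1 - θ) (w₂ := θ)
          (p₁ := 1) (p₂ := Real.exp (l0 * x ^ 2)) (by linarith) hθ0 zero_le_one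
          (Real.exp_pos _).le (by ring)
        simpa [Real.one_rpow] using this
      calc Real.cosh (t * x) ≤ Real.exp ((t * x) ^ 2 / 2) := h1
        _ = Real.exp (θ * (l0 * x ^ 2)) := by rw [h2]
        _ ≤ (1 - θ) + θ * Real.exp (l0 * x ^ 2) := h3
    have hintL : Integrable (fun ω =>
        (Real.exp (t * W 1 ω) + Real.exp (t * -(W 1 ω))) / 2) μ :=
      (hint1.add hint2).div_const 2
    have hintR : Integrable (fun ω =>
        (1 - θ) + θ * Real.exp (l0 * (W 1 ω) ^ 2)) μ :=
      (integrable_const _).add (hexp1.const_mul θ)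
    have hmono := integral_mono hintL hintR hpt
    have hL : ∫ ω, (Real.exp (t * W 1 ω) + Real.exp (t * -(W 1 ω))) / 2 ∂μ
        = ∫ ω, Real.exp (t * W 1 ω) ∂μ := by
      rw [integral_div, integral_add hint1 hint2, ← hsym]
      ring
    have hR : ∫ ω, ((1 - θ) + θ * Real.exp (l0 * (W 1 ω) ^ 2)) ∂μ
        = (1 - θ) + θ * K := by
      rw [integral_add (integrable_const _) (hexp1.const_mul θ), integral_const,
        integral_const_mul]
      simp [hKdef]
    rw [hL, hR] at hmono
    have hfin : (1 - θ) + θ * K ≤ Real.exp (c * t ^ 2) := by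
      have h1 : (1 - θ) + θ * K = θ * (K - 1) + 1 := by ring
      have h2 : θ * (K - 1) + 1 ≤ Real.exp (θ * (K - 1)) := Real.add_one_le_exp _
      have h3 : θ * (K - 1) ≤ c * t ^ 2 := by
        rw [hθdef, hcdef]
        rw [div_mul_eq_mul_div, mul_comm]
        have h4 : (K - 1) / (2 * l0) * t ^ 2 ≤ ((K - 1) / (2 * l0) + 1 / (4 * l0)) * t ^ 2 := by
          apply mul_le_mul_of_nonneg_right _ (sq_nonneg t)
          have : (0:ℝ) < 1 / (4 * l0) := by positivity
          linarith
        calc (K - 1) * t ^ 2 / (2 * l0) = (K - 1) / (2 * l0) * t ^ 2 := by ring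
          _ ≤ _ := h4
      calc (1 - θ) + θ * K = θ * (K - 1) + 1 := h1
        _ ≤ Real.exp (θ * (K - 1)) := h2
        _ ≤ Real.exp (c * t ^ 2) := Real.exp_le_exp.mpr h3
    linarith
  · -- large t : crude bound
    have hpt : ∀ ω, Real.exp (t * W 1 ω)
        ≤ Real.exp (t ^ 2 / (4 * l0)) * Real.exp (l0 * (W 1 ω) ^ 2) := by
      intro ω
      rw [← Real.exp_add]
      apply Real.exp_le_exp.mpr
      rw [← sub_nonneg]
      have h : t ^ 2 / (4 * l0) + l0 * W 1 ω ^ 2 - t * W 1 ω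
          = (t - 2 * l0 * W 1 ω) ^ 2 / (4 * l0) := by field_simp; ring
      rw [h]; positivity
    have hint1 : Integrable (fun ω => Real.exp (t * W 1 ω)) μ :=
      int_exp_tW hWmeas hWident hl0 hexp1 1 t
    have hmono := integral_mono hint1 (hexp1.const_mul (Real.exp (t ^ 2 / (4 * l0)))) hpt
    rw [integral_const_mul] at hmono
    have hstep : Real.exp (t ^ 2 / (4 * l0)) * K ≤ Real.exp (c * t ^ 2) := by
      have hKle : K ≤ Real.exp ((K - 1) / (2 * l0) * t ^ 2) := by
        have h1 : K ≤ Real.exp (K - 1) := by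
          have := Real.add_one_le_exp (K - 1); linarith
        have h2 : K - 1 ≤ (K - 1) / (2 * l0) * t ^ 2 := by
          rw [div_mul_eq_mul_div, le_div_iff₀ (by positivity)]
          nlinarith [hK1]
        calc K ≤ Real.exp (K - 1) := h1
          _ ≤ _ := Real.exp_le_exp.mpr h2
      calc Real.exp (t ^ 2 / (4 * l0)) * K
          ≤ Real.exp (t ^ 2 / (4 * l0)) * Real.exp ((K - 1) / (2 * l0) * t ^ 2) := by
            apply mul_le_mul_of_nonneg_left hKle (Real.exp_pos _).le
        _ = Real.exp (t ^ 2 / (4 * l0) + (K - 1) / (2 * l0) * t ^ 2) := by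
            rw [← Real.exp_add]
        _ = Real.exp (c * t ^ 2) := by rw [hcdef]; ring_nf
    calc ∫ ω, Real.exp (t * W 1 ω) ∂μ ≤ Real.exp (t ^ 2 / (4 * l0)) * K := hmono
      _ ≤ Real.exp (c * t ^ 2) := hstep

end Part2
section Part2b
set_option linter.unusedSectionVars false
set_option maxHeartbeats 1000000
variable {Ω : Type*} [MeasurableSpace Ω] {μ : Measure Ω} [IsProbabilityMeasure μ]
  {W : ℕ → Ω → ℝ}

lemma int_exp_tS (hWmeas : ∀ i, Measurable (W i))
    (hWindep : iIndepFun W μ)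
    (hWident : ∀ i, Measure.map (W i) μ = Measure.map (W 1) μ)
    {l0 : ℝ} (hl0 : 0 < l0)
    (hexp1 : Integrable (fun ω => Real.exp (l0 * (W 1 ω) ^ 2)) μ)
    (n : ℕ) (t : ℝ) :
    Integrable (fun ω => Real.exp (t * ∑ j ∈ Finset.Icc 1 n, W j ω)) μ := by
  have h := hWindep.integrable_exp_mul_sum hWmeas (s := Finset.Icc 1 n)
    (fun i _ => int_exp_tW hWmeas hWident hl0 hexp1 i t) (t := t)
  simpa [Finset.sum_apply] using h

lemma mgfS_le (hWmeas : ∀ i, Measurable (W i))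
    (hWindep : iIndepFun W μ)
    (hWident : ∀ i, Measure.map (W i) μ = Measure.map (W 1) μ)
    (hWsymm : Measure.map (W 1) μ = Measure.map (fun ω => -(W 1 ω)) μ)
    {l0 : ℝ} (hl0 : 0 < l0)
    (hexp1 : Integrable (fun ω => Real.exp (l0 * (W 1 ω) ^ 2)) μ)
    (n : ℕ) (t : ℝ) :
    ∫ ω, Real.exp (t * ∑ j ∈ Finset.Icc 1 n, W j ω) ∂μ
      ≤ Real.exp (((((∫ ω, Real.exp (l0 * (W 1 ω) ^ 2) ∂μ) - 1) / (2 * l0)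
          + 1 / (4 * l0)) * n) * t ^ 2) := by
  set c := ((∫ ω, Real.exp (l0 * (W 1 ω) ^ 2) ∂μ) - 1) / (2 * l0) + 1 / (4 * l0) with hcdef
  have hc0 : 0 < c := by
    have hK1 : 1 ≤ ∫ ω, Real.exp (l0 * (W 1 ω) ^ 2) ∂μ := K_ge_one hl0 hexp1
    have h1 : 0 ≤ ((∫ ω, Real.exp (l0 * (W 1 ω) ^ 2) ∂μ) - 1) / (2 * l0) := by
      apply div_nonneg (by linarith) (by positivity)
    have h2 : (0:ℝ) < 1 / (4 * l0) := by positivity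
    rw [hcdef]; linarith
  have hmgf := hWindep.mgf_sum hWmeas (Finset.Icc 1 n) (t := t)
  have hLHS : mgf (∑ i ∈ Finset.Icc 1 n, W i) μ t
      = ∫ ω, Real.exp (t * ∑ j ∈ Finset.Icc 1 n, W j ω) ∂μ := by
    unfold mgf
    congr 1
    funext ω
    simp [Finset.sum_apply]
  have hprod : ∏ i ∈ Finset.Icc 1 n, mgf (W i) μ t ≤ Real.exp (c * t ^ 2) ^ n := by
    have h1 : ∏ i ∈ Finset.Icc 1 n, mgf (W i) μ t
        ≤ ∏ i ∈ Finset.Icc 1 n, Real.exp (c * t ^ 2) := by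
      apply Finset.prod_le_prod (fun i _ => mgf_nonneg)
      intro i _
      exact mgfW_le hWmeas hWident hWsymm hl0 hexp1 i t
    rwa [Finset.prod_const, Nat.card_Icc, Nat.add_sub_cancel] at h1
  have hexpn : Real.exp (c * t ^ 2) ^ n = Real.exp ((c * n) * t ^ 2) := by
    rw [← Real.exp_nat_mul]
    ring_nf
  calc ∫ ω, Real.exp (t * ∑ j ∈ Finset.Icc 1 n, W j ω) ∂μ
      = ∏ i ∈ Finset.Icc 1 n, mgf (W i) μ t := by rw [← hLHS, hmgf]
    _ ≤ Real.exp (c * t ^ 2) ^ n := hprod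
    _ = Real.exp ((c * n) * t ^ 2) := hexpn

lemma pointwise_even_moment {t : ℝ} (ht : 0 < t) (m : ℕ) (x : ℝ) :
    x ^ (2 * m) ≤ ((2 * m).factorial : ℝ) / t ^ (2 * m)
      * (Real.exp (t * x) + Real.exp (-(t * x))) := by
  have h1 : |t * x| ^ (2 * m) ≤ ((2 * m).factorial : ℝ) * Real.exp |t * x| :=
    pow_le_factorial_mul_exp (abs_nonneg _) (2 * m)
  have h2 : Real.exp |t * x| ≤ Real.exp (t * x) + Real.exp (-(t * x)) := by
    rcases le_total 0 (t * x) with h | h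
    · rw [abs_of_nonneg h]; linarith [Real.exp_pos (-(t * x))]
    · rw [abs_of_nonpos h]; linarith [Real.exp_pos (t * x)]
  have h3 : |t * x| ^ (2 * m) = t ^ (2 * m) * x ^ (2 * m) := by
    rw [abs_mul, mul_pow, abs_of_pos ht, (even_two_mul m).pow_abs]
  rw [div_mul_eq_mul_div, le_div_iff₀ (by positivity)]
  calc x ^ (2 * m) * t ^ (2 * m) = t ^ (2 * m) * x ^ (2 * m) := by ring
    _ = |t * x| ^ (2 * m) := h3.symm
    _ ≤ ((2 * m).factorial : ℝ) * Real.exp |t * x| := h1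
    _ ≤ ((2 * m).factorial : ℝ) * (Real.exp (t * x) + Real.exp (-(t * x))) := by
        apply mul_le_mul_of_nonneg_left h2 (by positivity)

lemma central_binom_le (m : ℕ) : (2 * m).factorial ≤ 4 ^ m * m.factorial ^ 2 := by
  have h := Nat.choose_mul_factorial_mul_factorial (show m ≤ 2 * m by omega)
  have h2m : 2 * m - m = m := by omega
  rw [h2m] at h
  have hc4 : (2 * m).choose m ≤ 4 ^ m := by
    have h1 : (2 * m).choose m ≤ ∑ i ∈ Finset.range (2 * m + 1), (2 * m).choose i :=
      Finset.single_le_sum (fun i _ => Nat.zero_le _) (Finset.mem_range.mpr (by omega))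
    rw [Nat.sum_range_choose] at h1
    calc (2 * m).choose m ≤ 2 ^ (2 * m) := h1
      _ = 4 ^ m := by rw [pow_mul]; norm_num
  calc (2 * m).factorial = (2 * m).choose m * m.factorial * m.factorial := h.symm
    _ ≤ 4 ^ m * m.factorial * m.factorial := by
        exact Nat.mul_le_mul_right _ (Nat.mul_le_mul_right _ hc4)
    _ = 4 ^ m * m.factorial ^ 2 := by ring

lemma even_moment_of_mgf {S : Ω → ℝ} {a : ℝ} (ha : 0 < a)
    (hint : ∀ t : ℝ, Integrable (fun ω => Real.exp (t * S ω)) μ)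
    (hmgf : ∀ t : ℝ, ∫ ω, Real.exp (t * S ω) ∂μ ≤ Real.exp (a * t ^ 2))
    {m : ℕ} (hm : 1 ≤ m) :
    ∫ ω, S ω ^ (2 * m) ∂μ ≤ m.factorial * (8 * Real.exp 1 * a) ^ m := by
  set t := Real.sqrt ((m : ℝ) / a) with htdef
  have hmpos : (0:ℝ) < m := by exact_mod_cast hm
  have htpos : 0 < t := Real.sqrt_pos.mpr (by positivity)
  have ht2 : t ^ 2 = (m : ℝ) / a := Real.sq_sqrt (by positivity)
  have hintneg : Integrable (fun ω => Real.exp (-(t * S ω))) μ := by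
    simpa [neg_mul] using hint (-t)
  have hintR : Integrable (fun ω => ((2 * m).factorial : ℝ) / t ^ (2 * m)
      * (Real.exp (t * S ω) + Real.exp (-(t * S ω)))) μ :=
    ((hint t).add hintneg).const_mul _
  have hmono := integral_mono_of_nonneg
    (Eventually.of_forall fun ω => (even_two_mul m).pow_nonneg (S ω))
    hintR (Eventually.of_forall fun ω => pointwise_even_moment htpos m (S ω))
  have hR : ∫ ω, ((2 * m).factorial : ℝ) / t ^ (2 * m)
      * (Real.exp (t * S ω) + Real.exp (-(t * S ω))) ∂μ
      ≤ ((2 * m).factorial : ℝ) / t ^ (2 * m) * (2 * Real.exp ((m : ℝ))) := by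
    rw [integral_const_mul, integral_add (hint t) hintneg]
    have e1 : ∫ ω, Real.exp (t * S ω) ∂μ ≤ Real.exp ((m : ℝ)) := by
      have := hmgf t
      rwa [ht2, mul_div_cancel₀ _ (ne_of_gt ha)] at this
    have e2 : ∫ ω, Real.exp (-(t * S ω)) ∂μ ≤ Real.exp ((m : ℝ)) := by
      have h := hmgf (-t)
      have heq : a * (-t) ^ 2 = (m : ℝ) := by
        rw [neg_pow, ht2]
        simp [mul_div_cancel₀ _ (ne_of_gt ha)]
      rw [heq] at h
      calc ∫ ω, Real.exp (-(t * S ω)) ∂μ = ∫ ω, Real.exp (-t * S ω) ∂μ := by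
            simp [neg_mul]
        _ ≤ Real.exp ((m : ℝ)) := h
    have hD : (0:ℝ) ≤ ((2 * m).factorial : ℝ) / t ^ (2 * m) := by positivity
    calc ((2 * m).factorial : ℝ) / t ^ (2 * m)
          * ((∫ ω, Real.exp (t * S ω) ∂μ) + ∫ ω, Real.exp (-(t * S ω)) ∂μ)
        ≤ ((2 * m).factorial : ℝ) / t ^ (2 * m)
          * (Real.exp ((m : ℝ)) + Real.exp ((m : ℝ))) := by
          apply mul_le_mul_of_nonneg_left (by linarith) hD
      _ = ((2 * m).factorial : ℝ) / t ^ (2 * m) * (2 * Real.exp ((m : ℝ))) := by ring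
  have hT : ((2 * m).factorial : ℝ) / t ^ (2 * m) * (2 * Real.exp ((m : ℝ)))
      ≤ m.factorial * (8 * Real.exp 1 * a) ^ m := by
    have ht2m : t ^ (2 * m) = ((m : ℝ) / a) ^ m := by rw [pow_mul, ht2]
    have hexpm : Real.exp ((m : ℝ)) = Real.exp 1 ^ m := by
      rw [← Real.exp_one_pow]
    have hfac : ((2 * m).factorial : ℝ) ≤ 4 ^ m * (m.factorial : ℝ) ^ 2 := by
      exact_mod_cast central_binom_le m
    have hmm : (m.factorial : ℝ) ≤ (m : ℝ) ^ m := by exact_mod_cast Nat.factorial_le_pow m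
    have hkey : (m.factorial : ℝ) * ((a / m) ^ m) ≤ a ^ m := by
      have h0 : (0:ℝ) < (m:ℝ) ^ m := by positivity
      rw [div_pow, ← mul_div_assoc, div_le_iff₀ h0]
      calc (m.factorial : ℝ) * a ^ m ≤ (m : ℝ) ^ m * a ^ m := by
            apply mul_le_mul_of_nonneg_right hmm (by positivity)
        _ = a ^ m * (m : ℝ) ^ m := by ring
    have hdiv : ((2 * m).factorial : ℝ) / t ^ (2 * m)
        = ((2 * m).factorial : ℝ) * (a / m) ^ m := by
      rw [ht2m, div_eq_mul_inv, ← inv_pow, inv_div]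
    rw [hdiv, hexpm]
    have h2le : (2:ℝ) ≤ 2 ^ m := by
      calc (2:ℝ) = 2 ^ 1 := by norm_num
        _ ≤ 2 ^ m := by apply pow_le_pow_right₀ (by norm_num) hm
    calc ((2 * m).factorial : ℝ) * (a / m) ^ m * (2 * Real.exp 1 ^ m)
        ≤ (4 ^ m * (m.factorial : ℝ) ^ 2) * (a / m) ^ m * (2 * Real.exp 1 ^ m) := by
          apply mul_le_mul_of_nonneg_right (mul_le_mul_of_nonneg_right hfac (by positivity))
            (by positivity)
      _ = (m.factorial : ℝ) * ((m.factorial : ℝ) * (a / m) ^ m) * (2 * 4 ^ m * Real.exp 1 ^ m) := by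
          ring
      _ ≤ (m.factorial : ℝ) * a ^ m * (2 * 4 ^ m * Real.exp 1 ^ m) := by
          apply mul_le_mul_of_nonneg_right (mul_le_mul_of_nonneg_left hkey (by positivity))
            (by positivity)
      _ ≤ (m.factorial : ℝ) * a ^ m * (2 ^ m * 4 ^ m * Real.exp 1 ^ m) := by
          apply mul_le_mul_of_nonneg_left _ (by positivity)
          apply mul_le_mul_of_nonneg_right (mul_le_mul_of_nonneg_right h2le (by positivity))
            (by positivity)
      _ = (m.factorial : ℝ) * (8 * Real.exp 1 * a) ^ m := by
          rw [mul_pow, mul_pow]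
          have h8 : (8:ℝ) ^ m = 2 ^ m * 4 ^ m := by
            rw [← mul_pow]; norm_num
          rw [h8]
          ring
  calc ∫ ω, S ω ^ (2 * m) ∂μ
      ≤ ∫ ω, ((2 * m).factorial : ℝ) / t ^ (2 * m)
          * (Real.exp (t * S ω) + Real.exp (-(t * S ω))) ∂μ := hmono
    _ ≤ ((2 * m).factorial : ℝ) / t ^ (2 * m) * (2 * Real.exp ((m : ℝ))) := hR
    _ ≤ m.factorial * (8 * Real.exp 1 * a) ^ m := hT

end Part2b
section Part2c
set_option linter.unusedSectionVars false
set_option maxHeartbeats 1000000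
variable {Ω : Type*} [MeasurableSpace Ω] {μ : Measure Ω} [IsProbabilityMeasure μ]
  {W : ℕ → Ω → ℝ}

lemma EQm (hWmeas : ∀ i, Measurable (W i))
    (hWident : ∀ i, Measure.map (W i) μ = Measure.map (W 1) μ)
    {l0 : ℝ} (hl0 : 0 < l0)
    (hexp1 : Integrable (fun ω => Real.exp (l0 * (W 1 ω) ^ 2)) μ)
    (n m : ℕ) (hn : 1 ≤ n) (hm : 1 ≤ m) :
    ∫ ω, (∑ j ∈ Finset.Icc 1 n, (W j ω) ^ 2) ^ m ∂μ
      ≤ m.factorial * (((∫ ω, Real.exp (l0 * (W 1 ω) ^ 2) ∂μ) / l0) * n) ^ m := by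
  set K := ∫ ω, Real.exp (l0 * (W 1 ω) ^ 2) ∂μ with hKdef
  have hK1 : 1 ≤ K := K_ge_one hl0 hexp1
  have hKi : ∀ i, ∫ ω, Real.exp (l0 * (W i ω) ^ 2) ∂μ = K := fun i =>
    integral_comp_W hWmeas hWident i (f := fun x => Real.exp (l0 * x ^ 2))
      (((measurable_id.pow_const 2).const_mul l0).exp)
  have hexpi : ∀ i, Integrable (fun ω => Real.exp (l0 * (W i ω) ^ 2)) μ := fun i =>
    integrable_comp_W hWmeas hWident i (f := fun x => Real.exp (l0 * x ^ 2))
      (((measurable_id.pow_const 2).const_mul l0).exp) hexp1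
  have hnpos : (0:ℝ) < n := by exact_mod_cast hn
  set C := ((n:ℝ) / l0) ^ m * m.factorial * (1 / n) with hCdef
  have hC0 : 0 ≤ C := by positivity
  -- pointwise bound
  have hpt : ∀ ω, (∑ j ∈ Finset.Icc 1 n, (W j ω) ^ 2) ^ m
      ≤ C * ∑ j ∈ Finset.Icc 1 n, Real.exp (l0 * (W j ω) ^ 2) := by
    intro ω
    set Q := ∑ j ∈ Finset.Icc 1 n, (W j ω) ^ 2 with hQdef
    have hQ0 : 0 ≤ Q := Finset.sum_nonneg fun _ _ => sq_nonneg _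
    have step1 : (l0 * Q / n) ^ m ≤ (m.factorial : ℝ) * Real.exp (l0 * Q / n) :=
      pow_le_factorial_mul_exp (by positivity) m
    have step2 : Real.exp (l0 * Q / n) ≤ (1 / n) * ∑ j ∈ Finset.Icc 1 n,
        Real.exp (l0 * (W j ω) ^ 2) := by
      have hAMGM := Real.geom_mean_le_arith_mean_weighted (s := Finset.Icc 1 n)
        (w := fun _ => 1 / (n:ℝ)) (z := fun j => Real.exp (l0 * (W j ω) ^ 2))
        (fun i _ => by positivity)
        (by
          rw [Finset.sum_const, Nat.card_Icc, Nat.add_sub_cancel, nsmul_eq_mul]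
          field_simp)
        (fun i _ => (Real.exp_pos _).le)
      have hL : ∏ i ∈ Finset.Icc 1 n, Real.exp (l0 * (W i ω) ^ 2) ^ (1 / (n:ℝ))
          = Real.exp (l0 * Q / n) := by
        have h1 : ∀ i, Real.exp (l0 * (W i ω) ^ 2) ^ (1 / (n:ℝ))
            = Real.exp (l0 * (W i ω) ^ 2 * (1 / n)) := fun i => (Real.exp_mul _ _).symm
        rw [Finset.prod_congr rfl (fun i _ => h1 i), ← Real.exp_sum, ← Finset.sum_mul,
          hQdef, ← Finset.mul_sum]
        congr 1
        field_simp
      have hR : ∑ i ∈ Finset.Icc 1 n, (1 / (n:ℝ)) * Real.exp (l0 * (W i ω) ^ 2)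
          = (1 / n) * ∑ j ∈ Finset.Icc 1 n, Real.exp (l0 * (W j ω) ^ 2) :=
        (Finset.mul_sum _ _ _).symm
      rw [hL, hR] at hAMGM
      exact hAMGM
    have step3 : Q ^ m = ((n:ℝ) / l0) ^ m * (l0 * Q / n) ^ m := by
      rw [← mul_pow]
      congr 1
      field_simp
    calc Q ^ m = ((n:ℝ) / l0) ^ m * (l0 * Q / n) ^ m := step3
      _ ≤ ((n:ℝ) / l0) ^ m * ((m.factorial : ℝ) * Real.exp (l0 * Q / n)) := by
          apply mul_le_mul_of_nonneg_left step1 (by positivity)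
      _ ≤ ((n:ℝ) / l0) ^ m * ((m.factorial : ℝ) * ((1 / n) * ∑ j ∈ Finset.Icc 1 n,
            Real.exp (l0 * (W j ω) ^ 2))) := by
          apply mul_le_mul_of_nonneg_left (mul_le_mul_of_nonneg_left step2 (by positivity))
            (by positivity)
      _ = C * ∑ j ∈ Finset.Icc 1 n, Real.exp (l0 * (W j ω) ^ 2) := by
          rw [hCdef]; ring
  have hintR : Integrable (fun ω => C * ∑ j ∈ Finset.Icc 1 n,
      Real.exp (l0 * (W j ω) ^ 2)) μ :=
    (integrable_finset_sum _ (fun i _ => hexpi i)).const_mul C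
  have hmono := integral_mono_of_nonneg
    (Eventually.of_forall fun ω => pow_nonneg (Finset.sum_nonneg fun _ _ => sq_nonneg _) m)
    hintR (Eventually.of_forall hpt)
  have hRval : ∫ ω, C * ∑ j ∈ Finset.Icc 1 n, Real.exp (l0 * (W j ω) ^ 2) ∂μ
      = C * (n * K) := by
    rw [integral_const_mul, integral_finset_sum _ (fun i _ => hexpi i)]
    rw [Finset.sum_congr rfl (fun i _ => hKi i), Finset.sum_const, Nat.card_Icc,
      Nat.add_sub_cancel, nsmul_eq_mul]
  have hfinal : C * (n * K) ≤ m.factorial * ((K / l0) * n) ^ m := by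
    have h1 : C * (n * K) = (m.factorial : ℝ) * (((n:ℝ) / l0) ^ m * K) := by
      rw [hCdef]; field_simp
    have h2 : ((n:ℝ) / l0) ^ m * K ≤ ((K / l0) * n) ^ m := by
      have h3 : ((K / l0) * n) ^ m = K ^ m * ((n:ℝ) / l0) ^ m := by
        rw [← mul_pow]; congr 1; field_simp
      have h4 : K ≤ K ^ m := le_self_pow₀ (by linarith) (by omega)
      rw [h3]
      calc ((n:ℝ) / l0) ^ m * K ≤ ((n:ℝ) / l0) ^ m * K ^ m := by
            apply mul_le_mul_of_nonneg_left h4 (by positivity)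
        _ = K ^ m * ((n:ℝ) / l0) ^ m := by ring
    rw [h1]
    apply mul_le_mul_of_nonneg_left h2 (by positivity)
  calc ∫ ω, (∑ j ∈ Finset.Icc 1 n, (W j ω) ^ 2) ^ m ∂μ
      ≤ ∫ ω, C * ∑ j ∈ Finset.Icc 1 n, Real.exp (l0 * (W j ω) ^ 2) ∂μ := hmono
    _ = C * (n * K) := hRval
    _ ≤ m.factorial * ((K / l0) * n) ^ m := hfinal

end Part2c
section Final
set_option linter.unusedSectionVars false
set_option maxHeartbeats 1000000
variable {Ω : Type*} [MeasurableSpace Ω] {μ : Measure Ω} [IsProbabilityMeasure μ]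
  {W : ℕ → Ω → ℝ}

lemma part2_main (hWmeas : ∀ i, Measurable (W i))
    (hWindep : iIndepFun W μ)
    (hWident : ∀ i, Measure.map (W i) μ = Measure.map (W 1) μ)
    (hWsymm : Measure.map (W 1) μ = Measure.map (fun ω => -(W 1 ω)) μ)
    {l0 : ℝ} (hl0 : 0 < l0)
    (hexp1 : Integrable (fun ω => Real.exp (l0 * (W 1 ω) ^ 2)) μ) :
    ∃ C : ℝ, 0 < C ∧ ∀ n m : ℕ, 1 ≤ n → 2 ≤ m →
      ∫ ω, |(∑ j ∈ Finset.Icc 1 n, W j ω) ^ 2 - ∑ j ∈ Finset.Icc 1 n, (W j ω) ^ 2| ^ m ∂μ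
        ≤ (m.factorial : ℝ) * (C * (n : ℝ) * ((n : ℝ) - 1)) ^ ((m : ℝ) / 2) := by
  have niceW : ∀ i, Nice μ (W i) := niceW_of_exp hWmeas hWident hl0 hexp1
  have nS : ∀ n, Nice μ (fun ω => ∑ j ∈ Finset.Icc 1 n, W j ω) :=
    fun n => Nice.finset_sum (fun i _ => niceW i)
  have nQ : ∀ n, Nice μ (fun ω => ∑ j ∈ Finset.Icc 1 n, (W j ω) ^ 2) :=
    fun n => Nice.finset_sum (fun i _ => (niceW i).pow 2)
  set K := ∫ ω, Real.exp (l0 * (W 1 ω) ^ 2) ∂μ with hKdef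
  have hK1 : 1 ≤ K := K_ge_one hl0 hexp1
  set c := (K - 1) / (2 * l0) + 1 / (4 * l0) with hcdef
  have hc0 : 0 < c := by
    have h1 : 0 ≤ (K - 1) / (2 * l0) := div_nonneg (by linarith) (by positivity)
    have h2 : (0:ℝ) < 1 / (4 * l0) := by positivity
    rw [hcdef]; linarith
  set cS := 8 * Real.exp 1 * c with hcSdef
  have hcS0 : 0 < cS := by
    have := Real.exp_pos 1
    rw [hcSdef]; positivity
  set cQ := K / l0 with hcQdef
  have hcQ0 : 0 < cQ := by rw [hcQdef]; positivity
  set cM := cS + cQ with hcMdef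
  have hcM0 : 0 < cM := by rw [hcMdef]; linarith
  refine ⟨8 * cM ^ 2, by positivity, ?_⟩
  intro n m hn hm
  have hm1 : 1 ≤ m := by omega
  rcases eq_or_lt_of_le hn with h1 | h2
  · -- n = 1 : both sides vanish
    subst h1
    have hzero : ∀ ω : Ω,
        |(∑ j ∈ Finset.Icc 1 1, W j ω) ^ 2 - ∑ j ∈ Finset.Icc 1 1, (W j ω) ^ 2| ^ m = 0 := by
      intro ω
      rw [Finset.Icc_self, Finset.sum_singleton, Finset.sum_singleton, sub_self, abs_zero,
        zero_pow (by omega)]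
    have hL : ∫ ω, |(∑ j ∈ Finset.Icc 1 1, W j ω) ^ 2
        - ∑ j ∈ Finset.Icc 1 1, (W j ω) ^ 2| ^ m ∂μ = 0 := by
      rw [show (fun ω : Ω => |(∑ j ∈ Finset.Icc 1 1, W j ω) ^ 2
          - ∑ j ∈ Finset.Icc 1 1, (W j ω) ^ 2| ^ m) = fun _ => (0:ℝ) from funext hzero]
      exact integral_zero _ _
    rw [hL]
    have hbase : 8 * cM ^ 2 * ((1:ℕ) : ℝ) * (((1:ℕ) : ℝ) - 1) = 0 := by
      push_cast; ring
    rw [hbase, Real.zero_rpow (by positivity : ((m:ℝ)/2) ≠ 0)]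
    simp
  · -- n ≥ 2
    have hn2 : (2:ℝ) ≤ (n:ℝ) := by exact_mod_cast h2
    have hn0 : (0:ℝ) < (n:ℝ) := by linarith
    -- moment bounds for S and Q
    have hintS : ∀ t : ℝ, Integrable
        (fun ω => Real.exp (t * ∑ j ∈ Finset.Icc 1 n, W j ω)) μ :=
      int_exp_tS hWmeas hWindep hWident hl0 hexp1 n
    have hmgfS : ∀ t : ℝ, ∫ ω, Real.exp (t * ∑ j ∈ Finset.Icc 1 n, W j ω) ∂μ
        ≤ Real.exp ((c * n) * t ^ 2) := by
      intro t
      have h := mgfS_le hWmeas hWindep hWident hWsymm hl0 hexp1 n t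
      exact h
    have hS2m : ∫ ω, (∑ j ∈ Finset.Icc 1 n, W j ω) ^ (2 * m) ∂μ
        ≤ m.factorial * (cS * n) ^ m := by
      have h := even_moment_of_mgf (S := fun ω => ∑ j ∈ Finset.Icc 1 n, W j ω)
        (a := c * n) (by positivity) hintS hmgfS hm1
      have heq : 8 * Real.exp 1 * (c * n) = cS * n := by rw [hcSdef]; ring
      rwa [heq] at h
    have hQm : ∫ ω, (∑ j ∈ Finset.Icc 1 n, (W j ω) ^ 2) ^ m ∂μ
        ≤ m.factorial * (cQ * n) ^ m := by
      have h := EQm hWmeas hWident hl0 hexp1 n m hn hm1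
      exact h
    -- pointwise split
    have hpt : ∀ ω : Ω, |(∑ j ∈ Finset.Icc 1 n, W j ω) ^ 2
          - ∑ j ∈ Finset.Icc 1 n, (W j ω) ^ 2| ^ m
        ≤ 2 ^ (m - 1) * ((∑ j ∈ Finset.Icc 1 n, W j ω) ^ (2 * m)
          + (∑ j ∈ Finset.Icc 1 n, (W j ω) ^ 2) ^ m) := by
      intro ω
      set S := ∑ j ∈ Finset.Icc 1 n, W j ω with hSdef
      set Q := ∑ j ∈ Finset.Icc 1 n, (W j ω) ^ 2 with hQdef
      have hQ0 : 0 ≤ Q := Finset.sum_nonneg fun _ _ => sq_nonneg _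
      have habs : |S ^ 2 - Q| ≤ S ^ 2 + Q := by
        calc |S ^ 2 - Q| = |S ^ 2 + -Q| := by rw [sub_eq_add_neg]
          _ ≤ |S ^ 2| + |-Q| := abs_add_le _ _
          _ = S ^ 2 + Q := by rw [abs_neg, abs_of_nonneg (sq_nonneg S), abs_of_nonneg hQ0]
      calc |S ^ 2 - Q| ^ m ≤ (S ^ 2 + Q) ^ m :=
            pow_le_pow_left₀ (abs_nonneg _) habs m
        _ ≤ 2 ^ (m - 1) * ((S ^ 2) ^ m + Q ^ m) := add_pow_le (sq_nonneg S) hQ0 m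
        _ = 2 ^ (m - 1) * (S ^ (2 * m) + Q ^ m) := by rw [← pow_mul]
    have hintR : Integrable (fun ω => 2 ^ (m - 1)
        * ((∑ j ∈ Finset.Icc 1 n, W j ω) ^ (2 * m)
          + (∑ j ∈ Finset.Icc 1 n, (W j ω) ^ 2) ^ m)) μ :=
      (((nS n).integrable_pow (2 * m)).add ((nQ n).integrable_pow m)).const_mul _
    have hmono := integral_mono_of_nonneg
      (Eventually.of_forall fun ω => pow_nonneg (abs_nonneg _) m)
      hintR (Eventually.of_forall hpt)
    have hRval : ∫ ω, 2 ^ (m - 1) * ((∑ j ∈ Finset.Icc 1 n, W j ω) ^ (2 * m)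
          + (∑ j ∈ Finset.Icc 1 n, (W j ω) ^ 2) ^ m) ∂μ
        = 2 ^ (m - 1) * ((∫ ω, (∑ j ∈ Finset.Icc 1 n, W j ω) ^ (2 * m) ∂μ)
          + ∫ ω, (∑ j ∈ Finset.Icc 1 n, (W j ω) ^ 2) ^ m ∂μ) := by
      rw [integral_const_mul, integral_add ((nS n).integrable_pow (2 * m))
        ((nQ n).integrable_pow m)]
    -- numeric chain
    have hstep : (2:ℝ) ^ (m - 1) * ((∫ ω, (∑ j ∈ Finset.Icc 1 n, W j ω) ^ (2 * m) ∂μ)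
          + ∫ ω, (∑ j ∈ Finset.Icc 1 n, (W j ω) ^ 2) ^ m ∂μ)
        ≤ (m.factorial : ℝ) * (2 * (cM * n)) ^ m := by
      have hA : (cS * (n:ℝ)) ^ m ≤ (cM * n) ^ m := by
        apply pow_le_pow_left₀ (by positivity)
        have : cS ≤ cM := by rw [hcMdef]; linarith
        apply mul_le_mul_of_nonneg_right this hn0.le
      have hB : (cQ * (n:ℝ)) ^ m ≤ (cM * n) ^ m := by
        apply pow_le_pow_left₀ (by positivity)
        have : cQ ≤ cM := by rw [hcMdef]; linarith
        apply mul_le_mul_of_nonneg_right this hn0.le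
      have h2m : (2:ℝ) ^ (m - 1) * 2 = 2 ^ m := by
        rw [← pow_succ]
        congr 1
        omega
      calc (2:ℝ) ^ (m - 1) * ((∫ ω, (∑ j ∈ Finset.Icc 1 n, W j ω) ^ (2 * m) ∂μ)
            + ∫ ω, (∑ j ∈ Finset.Icc 1 n, (W j ω) ^ 2) ^ m ∂μ)
          ≤ (2:ℝ) ^ (m - 1) * ((m.factorial : ℝ) * (cM * n) ^ m
            + (m.factorial : ℝ) * (cM * n) ^ m) := by
            apply mul_le_mul_of_nonneg_left _ (by positivity)
            have e1 := hS2m.trans (mul_le_mul_of_nonneg_left hA (by positivity))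
            have e2 := hQm.trans (mul_le_mul_of_nonneg_left hB (by positivity))
            linarith
        _ = (m.factorial : ℝ) * ((2:ℝ) ^ (m - 1) * 2 * (cM * n) ^ m) := by ring
        _ = (m.factorial : ℝ) * ((2:ℝ) ^ m * (cM * n) ^ m) := by rw [h2m]
        _ = (m.factorial : ℝ) * (2 * (cM * n)) ^ m := by rw [← mul_pow]
    have hsq : (2 * (cM * (n:ℝ))) ^ 2 ≤ 8 * cM ^ 2 * n * ((n:ℝ) - 1) := by
      have key : (0:ℝ) ≤ 4 * cM ^ 2 * (n:ℝ) * ((n:ℝ) - 2) :=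
        mul_nonneg (by positivity) (by linarith)
      nlinarith [key]
    have hxm : (2 * (cM * (n:ℝ))) ^ m ≤ (8 * cM ^ 2 * n * ((n:ℝ) - 1)) ^ ((m:ℝ) / 2) := by
      have hx0 : (0:ℝ) < 2 * (cM * n) := by positivity
      have e1 : ((2 * (cM * (n:ℝ))) ^ 2) ^ ((m:ℝ) / 2) = (2 * (cM * (n:ℝ))) ^ m := by
        rw [← Real.rpow_natCast (2 * (cM * (n:ℝ))) 2, ← Real.rpow_mul hx0.le,
          ← Real.rpow_natCast (2 * (cM * (n:ℝ))) m]
        congr 1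
        push_cast
        ring
      rw [← e1]
      apply Real.rpow_le_rpow (by positivity) hsq (by positivity)
    calc ∫ ω, |(∑ j ∈ Finset.Icc 1 n, W j ω) ^ 2
          - ∑ j ∈ Finset.Icc 1 n, (W j ω) ^ 2| ^ m ∂μ
        ≤ ∫ ω, 2 ^ (m - 1) * ((∑ j ∈ Finset.Icc 1 n, W j ω) ^ (2 * m)
          + (∑ j ∈ Finset.Icc 1 n, (W j ω) ^ 2) ^ m) ∂μ := hmono
      _ = 2 ^ (m - 1) * ((∫ ω, (∑ j ∈ Finset.Icc 1 n, W j ω) ^ (2 * m) ∂μ)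
          + ∫ ω, (∑ j ∈ Finset.Icc 1 n, (W j ω) ^ 2) ^ m ∂μ) := hRval
      _ ≤ (m.factorial : ℝ) * (2 * (cM * n)) ^ m := hstep
      _ ≤ (m.factorial : ℝ) * (8 * cM ^ 2 * (n:ℝ) * ((n:ℝ) - 1)) ^ ((m:ℝ) / 2) := by
          apply mul_le_mul_of_nonneg_left hxm (by positivity)

end Final

open MeasureTheory ProbabilityTheory Filter

/-- **Moment identities for i.i.d. symmetric charges (Lemma 2.1).**
`E[((Σ ω_j)² − Σ ω_j²)²] = 2n(n−1)` and, for some `C > 0`,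
`E[|(Σ ω_j)² − Σ ω_j²|^m] ≤ m! (C n(n−1))^{m/2}` for all `n ≥ 1`, `m ≥ 2`. -/
theorem charge_chaos_moment_bounds
    {Ω : Type*} [MeasurableSpace Ω] (μ : Measure Ω) [IsProbabilityMeasure μ]
    (W : ℕ → Ω → ℝ)
    (hWmeas : ∀ i, Measurable (W i))
    (hWindep : iIndepFun W μ)
    (hWident : ∀ i, Measure.map (W i) μ = Measure.map (W 1) μ)
    (hWsymm : Measure.map (W 1) μ = Measure.map (fun ω => -(W 1 ω)) μ)
    (hWmom : ∫ ω, (W 1 ω) ^ 2 ∂μ = 1)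
    (hWexp : ∃ l0 > 0, Integrable (fun ω => Real.exp (l0 * (W 1 ω) ^ 2)) μ) :
    (∀ n : ℕ, 1 ≤ n →
      ∫ ω, ((∑ j ∈ Finset.Icc 1 n, W j ω) ^ 2 - ∑ j ∈ Finset.Icc 1 n, (W j ω) ^ 2) ^ 2 ∂μ
        = 2 * (n : ℝ) * ((n : ℝ) - 1)) ∧
    (∃ C : ℝ, 0 < C ∧ ∀ n m : ℕ, 1 ≤ n → 2 ≤ m →
      ∫ ω, |(∑ j ∈ Finset.Icc 1 n, W j ω) ^ 2 - ∑ j ∈ Finset.Icc 1 n, (W j ω) ^ 2| ^ m ∂μ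
        ≤ (m.factorial : ℝ) * (C * (n : ℝ) * ((n : ℝ) - 1)) ^ ((m : ℝ) / 2)) := by
  obtain ⟨l0, hl0, hexp1⟩ := hWexp
  constructor
  · intro n _
    exact part1_main hWmeas hWindep hWident hWsymm hWmom hl0 hexp1 n
  · exact part2_main hWmeas hWindep hWident hWsymm hl0 hexp1
end

section
/- For all integers m, n ≥ 1 and every truncation level K > 0, E[H̃_n^{2m}] ≥ ((2m)!/(2^{2m} m!)) A_m(n). -/
open MeasureTheory ProbabilityTheory Filter

lemma aux_prod_integral {Ω : Type*} [MeasurableSpace Ω] (μ : Measure Ω) [IsProbabilityMeasure μ]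
    (f : ℕ → Ω → ℝ) (hindep : iIndepFun f μ)
    (hmeas : ∀ i, Measurable (f i)) (hint : ∀ i, Integrable (f i) μ) (s : Finset ℕ) :
    Integrable (fun ω => ∏ r ∈ s, f r ω) μ ∧
      ∫ ω, ∏ r ∈ s, f r ω ∂μ = ∏ r ∈ s, ∫ ω, f r ω ∂μ := by
  classical
  induction s using Finset.induction_on with
  | empty => simp
  | @insert a s ha ih =>
    have hI : IndepFun (∏ j ∈ s, f j) (f a) μ :=
      hindep.indepFun_finset_prod_of_notMem hmeas ha
    have hps : (∏ j ∈ s, f j) = fun ω => ∏ j ∈ s, f j ω := by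
      funext ω; exact Finset.prod_apply ω s f
    have hI' : IndepFun (f a) (fun ω => ∏ j ∈ s, f j ω) μ := by
      rw [← hps]; exact hI.symm
    have hint2 : Integrable ((f a) * fun ω => ∏ j ∈ s, f j ω) μ :=
      hI'.integrable_mul (hint a) ih.1
    have heq : (fun ω => ∏ r ∈ insert a s, f r ω)
        = (f a) * fun ω => ∏ j ∈ s, f j ω := by
      funext ω; simp [Finset.prod_insert ha]
    constructor
    · rw [heq]; exact hint2
    · rw [heq, hI'.integral_mul_eq_mul_integral (hint a).aestronglyMeasurable ih.1.aestronglyMeasurable, Finset.prod_insert ha, ← ih.2]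

lemma aux_pow_integrable {Ω : Type*} [MeasurableSpace Ω] (μ : Measure Ω) [IsProbabilityMeasure μ]
    (V : Ω → ℝ) (hm : Measurable V) {l0 : ℝ} (hl0 : 0 < l0)
    (hint : Integrable (fun ω => Real.exp (l0 * V ω ^ 2)) μ) (c : ℕ) :
    Integrable (fun ω => V ω ^ c) μ := by
  refine Integrable.mono' ((integrable_const (1:ℝ)).add
    (hint.const_mul ((c.factorial : ℝ) / l0 ^ c))) ((hm.pow_const c).aestronglyMeasurable)
    (ae_of_all _ fun ω => ?_)
  have h1 : ‖V ω ^ c‖ = |V ω| ^ c := by rw [Real.norm_eq_abs, abs_pow]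
  have h2 : |V ω| ^ c ≤ 1 + (V ω ^ 2) ^ c := by
    rcases le_total (|V ω|) 1 with h | h
    · have : |V ω| ^ c ≤ 1 := pow_le_one₀ (abs_nonneg _) h
      have hpos : (0:ℝ) ≤ (V ω ^ 2) ^ c := by positivity
      linarith
    · have hle : |V ω| ≤ V ω ^ 2 := by
        have : |V ω| * 1 ≤ |V ω| * |V ω| :=
          mul_le_mul_of_nonneg_left h (abs_nonneg _)
        rw [mul_one] at this
        calc |V ω| ≤ |V ω| * |V ω| := this
        _ = V ω ^ 2 := by rw [← abs_mul, ← sq, abs_sq]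
      have := pow_le_pow_left₀ (abs_nonneg _) hle c
      have hpos : (0:ℝ) ≤ 1 := one_pos.le
      linarith
  have h3 : (V ω ^ 2) ^ c ≤ (c.factorial : ℝ) / l0 ^ c * Real.exp (l0 * V ω ^ 2) := by
    have hx : (0:ℝ) ≤ l0 * V ω ^ 2 := by positivity
    have hh := Real.pow_div_factorial_le_exp (l0 * V ω ^ 2) hx c
    have h4 : (l0 * V ω ^ 2) ^ c ≤ (c.factorial : ℝ) * Real.exp (l0 * V ω ^ 2) := by
      rw [div_le_iff₀ (by positivity : (0:ℝ) < (c.factorial : ℝ))] at hh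
      linarith [hh]
    rw [mul_pow] at h4
    rw [div_mul_eq_mul_div, le_div_iff₀ (by positivity : (0:ℝ) < l0 ^ c)]
    calc (V ω ^ 2) ^ c * l0 ^ c = l0 ^ c * (V ω ^ 2) ^ c := by ring
    _ ≤ (c.factorial : ℝ) * Real.exp (l0 * V ω ^ 2) := h4
  rw [h1]
  calc |V ω| ^ c ≤ 1 + (V ω ^ 2) ^ c := h2
  _ ≤ 1 + (c.factorial : ℝ) / l0 ^ c * Real.exp (l0 * V ω ^ 2) := by linarith

lemma aux_map_pow_integral {Ω : Type*} [MeasurableSpace Ω] {μ : Measure Ω}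
    (V U : Ω → ℝ) (hV : Measurable V) (hU : Measurable U)
    (h : Measure.map V μ = Measure.map U μ) (c : ℕ) :
    ∫ ω, V ω ^ c ∂μ = ∫ ω, U ω ^ c ∂μ := by
  have hm : AEStronglyMeasurable (fun x : ℝ => x ^ c) (Measure.map V μ) :=
    (measurable_id.pow_const c).aestronglyMeasurable
  have hm' : AEStronglyMeasurable (fun x : ℝ => x ^ c) (Measure.map U μ) :=
    (measurable_id.pow_const c).aestronglyMeasurable
  have h1 := integral_map hV.aemeasurable hm
  have h2 := integral_map hU.aemeasurable hm'
  rw [← h1, ← h2, h]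

lemma aux_map_pow_integrable {Ω : Type*} [MeasurableSpace Ω] {μ : Measure Ω}
    (V U : Ω → ℝ) (hV : Measurable V) (hU : Measurable U)
    (h : Measure.map V μ = Measure.map U μ) (c : ℕ)
    (hi : Integrable (fun ω => U ω ^ c) μ) :
    Integrable (fun ω => V ω ^ c) μ := by
  have hm : AEStronglyMeasurable (fun x : ℝ => x ^ c) (Measure.map V μ) :=
    (measurable_id.pow_const c).aestronglyMeasurable
  have hm' : AEStronglyMeasurable (fun x : ℝ => x ^ c) (Measure.map U μ) :=
    (measurable_id.pow_const c).aestronglyMeasurable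
  have h1 := integrable_map_measure hm hV.aemeasurable
  have h2 := integrable_map_measure hm' hU.aemeasurable
  rw [h] at h1
  have : Integrable ((fun x : ℝ => x ^ c) ∘ U) μ := hi
  exact h1.mp (h2.mpr this)

lemma aux_odd_moment_zero {Ω : Type*} [MeasurableSpace Ω] {μ : Measure Ω}
    (V : Ω → ℝ) (hV : Measurable V)
    (hsymm : Measure.map V μ = Measure.map (fun ω => -(V ω)) μ) {c : ℕ} (hc : Odd c) :
    ∫ ω, V ω ^ c ∂μ = 0 := by
  have h := aux_map_pow_integral V (fun ω => -(V ω)) hV hV.neg hsymm c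
  have h2 : ∫ ω, (-(V ω)) ^ c ∂μ = - ∫ ω, V ω ^ c ∂μ := by
    rw [← integral_neg]
    congr 1; funext ω; exact hc.neg_pow (V ω)
  rw [h2] at h
  linarith

open MeasureTheory ProbabilityTheory Filter Finset

/-- endpoint map of a tuple of edges -/
def Vf {κ : Type*} (e : κ → ℕ × ℕ) (z : κ × Fin 2) : ℕ :=
  if z.2 = 0 then (e z.1).1 else (e z.1).2

lemma fin2_cases : ∀ b : Fin 2, b = 0 ∨ b = 1 := by decide

lemma fin2_ne : ∀ x y : Fin 2, x ≠ y → x = if y = 0 then 1 else 0 := by decide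

lemma fiber_card_le {m : ℕ} (D : Finset (Fin m → ℕ × ℕ))
    (hD : ∀ e ∈ D, Function.Injective e) (g : (Fin m × Fin 2) → ℕ × ℕ) :
    ((D ×ˢ (univ : Finset (Equiv.Perm (Fin m × Fin 2)))).filter
      (fun p => (fun i => p.1 ((p.2 i).1)) = g)).card ≤ 2 ^ m * m.factorial := by
  classical
  set Fib := ((D ×ˢ (univ : Finset (Equiv.Perm (Fin m × Fin 2)))).filter
      (fun p => (fun i => p.1 ((p.2 i).1)) = g)) with hFib
  rcases Fib.eq_empty_or_nonempty with h | ⟨⟨e₀, σ₀⟩, h₀⟩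
  · rw [h]; simp
  -- basic facts about members of the fiber
  have hmemD : ∀ p ∈ Fib, p.1 ∈ D := by
    intro p hp; rw [hFib, mem_filter, mem_product] at hp; exact hp.1.1
  have hg : ∀ p ∈ Fib, ∀ i, p.1 ((p.2 i).1) = g i := by
    intro p hp i
    rw [hFib, mem_filter] at hp
    exact congrFun hp.2 i
  have hkey : ∀ p ∈ Fib, ∀ i i' : (Fin m × Fin 2), ((p.2 i).1 = (p.2 i').1 ↔ g i = g i') := by
    intro p hp i i'
    constructor
    · intro h; rw [← hg p hp i, ← hg p hp i', h]
    · intro h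
      apply hD p.1 (hmemD p hp)
      rw [hg p hp i, hg p hp i', h]
  have hbase : (⟨e₀, σ₀⟩ : (Fin m → ℕ × ℕ) × Equiv.Perm (Fin m × Fin 2)) ∈ Fib := h₀
  -- the data extracted from a fiber element
  set πf : (Fin m → ℕ × ℕ) × Equiv.Perm (Fin m × Fin 2) → (Fin m → Fin m) :=
    fun p t => (p.2 (σ₀.symm (t, 0))).1 with hπf
  set bf : (Fin m → ℕ × ℕ) × Equiv.Perm (Fin m × Fin 2) → (Fin m → Fin 2) :=
    fun p t => (p.2 (σ₀.symm (t, 0))).2 with hbf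
  have hπinj : ∀ p ∈ Fib, Function.Injective (πf p) := by
    intro p hp t t' h
    have h2 : g (σ₀.symm (t, 0)) = g (σ₀.symm (t', 0)) :=
      (hkey p hp _ _).mp h
    have h3 : (σ₀ (σ₀.symm (t, 0))).1 = (σ₀ (σ₀.symm (t', 0))).1 :=
      (hkey ⟨e₀, σ₀⟩ hbase _ _).mpr h2
    simpa using h3
  -- σ is determined by (πf, bf)
  have hσdet : ∀ p ∈ Fib, ∀ i : (Fin m × Fin 2), p.2 i =
      (πf p ((σ₀ i).1),
        if (σ₀ i).2 = 0 then bf p ((σ₀ i).1) else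
          (if bf p ((σ₀ i).1) = 0 then 1 else 0)) := by
    intro p hp i
    set t := (σ₀ i).1 with ht
    by_cases h0 : (σ₀ i).2 = 0
    · have hi : σ₀.symm (t, 0) = i := by
        rw [ht]
        have : σ₀ i = ((σ₀ i).1, (σ₀ i).2) := rfl
        rw [show ((σ₀ i).1, (0 : Fin 2)) = σ₀ i by rw [← h0]]
        exact σ₀.symm_apply_apply i
      rw [if_pos h0]
      apply Prod.ext
      · rw [hπf]; simp only [hi]
      · rw [hbf]; simp only [hi]
    · have hi' : σ₀ (σ₀.symm (t, 0)) = (t, 0) := σ₀.apply_symm_apply _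
      have hfsteq : (σ₀ i).1 = (σ₀ (σ₀.symm (t, 0))).1 := by rw [hi']
      have h1 : (p.2 i).1 = πf p t := by
        have hgg : g i = g (σ₀.symm (t, 0)) :=
          (hkey ⟨e₀, σ₀⟩ hbase _ _).mp hfsteq
        exact (hkey p hp _ _).mpr hgg
      have h2 : (p.2 i).2 ≠ bf p t := by
        intro heq
        have : p.2 i = p.2 (σ₀.symm (t, 0)) := Prod.ext h1 heq
        have hii : i = σ₀.symm (t, 0) := p.2.injective this
        rw [hii, hi'] at h0
        exact h0 rfl
      rw [if_neg h0]
      exact Prod.ext h1 (fin2_ne _ _ h2)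
  have hedet : ∀ p ∈ Fib, ∀ t : Fin m, p.1 t = g (p.2.symm (t, 0)) := by
    intro p hp t
    have := hg p hp (p.2.symm (t, 0))
    rwa [p.2.apply_symm_apply] at this
  -- the injection
  set Ψ : (Fin m → ℕ × ℕ) × Equiv.Perm (Fin m × Fin 2) → Equiv.Perm (Fin m) × (Fin m → Fin 2) :=
    fun p => (if h : Function.Injective (πf p) then
        Equiv.ofBijective _ (Finite.injective_iff_bijective.mp h) else 1, bf p) with hΨ
  have hinj : Set.InjOn Ψ ↑Fib := by
    intro p hp q hq h
    have hb : bf p = bf q := congrArg Prod.snd h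
    have hπ : πf p = πf q := by
      have h1 := congrArg Prod.fst h
      rw [hΨ] at h1
      simp only [dif_pos (hπinj p hp), dif_pos (hπinj q hq)] at h1
      funext t
      have := congrArg (fun (σ : Equiv.Perm (Fin m)) => σ t) h1
      simpa using this
    have hσ : p.2 = q.2 := by
      apply Equiv.ext
      intro i
      rw [hσdet p hp i, hσdet q hq i, hπ, hb]
    have he : p.1 = q.1 := by
      funext t
      rw [hedet p hp t, hedet q hq t, hσ]
    exact Prod.ext he hσ
  have hcard := Finset.card_le_card_of_injOn Ψ (fun p _ => mem_univ (Ψ p)) hinj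
  calc Fib.card ≤ (univ : Finset (Equiv.Perm (Fin m) × (Fin m → Fin 2))).card := hcard
  _ = 2 ^ m * m.factorial := by
      rw [card_univ, Fintype.card_prod, Fintype.card_perm, Fintype.card_fun]
      simp [Nat.mul_comm]

lemma count_le {m : ℕ} (D : Finset (Fin m → ℕ × ℕ)) (hD : ∀ e ∈ D, Function.Injective e)
    (G : Finset ((Fin m × Fin 2) → ℕ × ℕ)) (T : ((Fin m × Fin 2) → ℕ × ℕ) → ℝ)
    (hT : ∀ g, 0 ≤ T g) (TE : (Fin m → ℕ × ℕ) → ℝ)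
    (hTE : ∀ e ∈ D, ∀ σ : Equiv.Perm (Fin m × Fin 2), T (fun i => e ((σ i).1)) = TE e)
    (hmem : ∀ e ∈ D, ∀ σ : Equiv.Perm (Fin m × Fin 2), (fun i => e ((σ i).1)) ∈ G) :
    ((2 * m).factorial : ℝ) * ∑ e ∈ D, TE e
      ≤ 2 ^ m * (m.factorial : ℝ) * ∑ g ∈ G, T g := by
  classical
  set Φ : (Fin m → ℕ × ℕ) × Equiv.Perm (Fin m × Fin 2) → ((Fin m × Fin 2) → ℕ × ℕ) :=
    fun p i => p.1 ((p.2 i).1) with hΦ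
  have key : ∑ p ∈ D ×ˢ (univ : Finset (Equiv.Perm (Fin m × Fin 2))), T (Φ p)
      = ((2 * m).factorial : ℝ) * ∑ e ∈ D, TE e := by
    rw [Finset.sum_product]
    have h2 : ∀ e ∈ D, (∑ σ ∈ (univ : Finset (Equiv.Perm (Fin m × Fin 2))), T (Φ (e, σ)))
        = ((2 * m).factorial : ℝ) * TE e := by
      intro e he
      rw [Finset.sum_congr rfl (fun σ _ => hTE e he σ), Finset.sum_const, card_univ,
        Fintype.card_perm, Fintype.card_prod, Fintype.card_fin, Fintype.card_fin,
        nsmul_eq_mul, Nat.mul_comm m 2]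
    rw [Finset.sum_congr rfl h2, ← Finset.mul_sum]
  have key2 : ∑ p ∈ D ×ˢ (univ : Finset (Equiv.Perm (Fin m × Fin 2))), T (Φ p)
      = ∑ g ∈ (D ×ˢ univ).image Φ, ((D ×ˢ univ).filter (fun p => Φ p = g)).card • T g :=
    Finset.sum_comp T Φ
  have himg : (D ×ˢ (univ : Finset (Equiv.Perm (Fin m × Fin 2)))).image Φ ⊆ G := by
    intro g hgm
    rw [Finset.mem_image] at hgm
    obtain ⟨p, hp, rfl⟩ := hgm
    rw [mem_product] at hp
    exact hmem p.1 hp.1 p.2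
  rw [← key, key2]
  calc ∑ g ∈ (D ×ˢ univ).image Φ, ((D ×ˢ univ).filter (fun p => Φ p = g)).card • T g
      ≤ ∑ g ∈ (D ×ˢ univ).image Φ, (2 ^ m * (m.factorial : ℝ)) * T g := by
        apply Finset.sum_le_sum
        intro g hgm
        rw [nsmul_eq_mul]
        apply mul_le_mul_of_nonneg_right _ (hT g)
        have hfib := fiber_card_le D hD g
        calc ((((D ×ˢ univ).filter (fun p => Φ p = g)).card : ℝ))
            ≤ ((2 ^ m * m.factorial : ℕ) : ℝ) := by exact_mod_cast hfib
        _ = 2 ^ m * (m.factorial : ℝ) := by push_cast; ring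
  _ = (2 ^ m * (m.factorial : ℝ)) * ∑ g ∈ (D ×ˢ univ).image Φ, T g := by
        rw [← Finset.mul_sum]
  _ ≤ (2 ^ m * (m.factorial : ℝ)) * ∑ g ∈ G, T g := by
        apply mul_le_mul_of_nonneg_left _ (by positivity)
        exact Finset.sum_le_sum_of_subset_of_nonneg himg (fun g _ _ => hT g)

/-- the set of increasing pairs in `[1,n]²` -/
def Pset (n : ℕ) : Finset (ℕ × ℕ) :=
  (Finset.Icc 1 n ×ˢ Finset.Icc 1 n).filter fun p => p.1 < p.2

lemma tuple_count {α : Type*} [DecidableEq α] {m n : ℕ} (s : ℕ → α) (F : Finset (Fin m → α)) :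
    ∑ y ∈ F.filter (fun y => Function.Injective y),
        ∏ k : Fin m, (((Finset.Icc 1 n).filter (fun j => s j = y k)).offDiag.card)
      ≤ 2 ^ m * (((Fintype.piFinset fun _ : Fin m => Pset n).filter
          (fun e => Function.Injective (Vf e) ∧ ∀ t, s (e t).1 = s (e t).2)).card) := by
  classical
  set L : α → Finset ℕ := fun v => (Finset.Icc 1 n).filter (fun j => s j = v) with hL
  set Fy := F.filter (fun y => Function.Injective y) with hFy
  set Dm := ((Fintype.piFinset fun _ : Fin m => Pset n).filter
      (fun e => Function.Injective (Vf e) ∧ ∀ t, s (e t).1 = s (e t).2)) with hDm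
  have lhs_eq : ∑ y ∈ Fy, ∏ k : Fin m, (L (y k)).offDiag.card
      = (Fy.sigma (fun y => Fintype.piFinset fun k => (L (y k)).offDiag)).card := by
    rw [Finset.card_sigma]
    exact Finset.sum_congr rfl (fun y _ => (Fintype.card_piFinset _).symm)
  have rhs_eq : 2 ^ m * Dm.card
      = (((univ : Finset (Fin m → Fin 2))) ×ˢ Dm).card := by
    rw [Finset.card_product, card_univ, Fintype.card_fun, Fintype.card_fin, Fintype.card_fin]
  rw [lhs_eq, rhs_eq]
  set f : (Σ _y : Fin m → α, Fin m → ℕ × ℕ) → (Fin m → Fin 2) × (Fin m → ℕ × ℕ) :=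
    fun z => (fun t => if (z.2 t).1 < (z.2 t).2 then 0 else 1,
              fun t => if (z.2 t).1 < (z.2 t).2 then z.2 t else ((z.2 t).2, (z.2 t).1)) with hf
  apply Finset.card_le_card_of_injOn f
  · -- maps to
    rintro ⟨y, q⟩ hz
    rw [Finset.mem_coe, Finset.mem_sigma] at hz
    obtain ⟨hy, hq⟩ := hz
    rw [hFy, Finset.mem_filter] at hy
    have hq' : ∀ k, q k ∈ (L (y k)).offDiag := by
      intro k; exact Fintype.mem_piFinset.mp hq k
    have hmem : ∀ k, (q k).1 ∈ L (y k) ∧ (q k).2 ∈ L (y k) ∧ (q k).1 ≠ (q k).2 := by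
      intro k; exact Finset.mem_offDiag.mp (hq' k)
    have hs1 : ∀ k, (q k).1 ∈ Finset.Icc 1 n ∧ s (q k).1 = y k := by
      intro k; exact Finset.mem_filter.mp (hmem k).1
    have hs2 : ∀ k, (q k).2 ∈ Finset.Icc 1 n ∧ s (q k).2 = y k := by
      intro k; exact Finset.mem_filter.mp (hmem k).2.1
    rw [Finset.mem_coe, Finset.mem_product]
    constructor
    · exact mem_univ _
    rw [hDm, Finset.mem_filter]
    set e : Fin m → ℕ × ℕ := fun t => if (q t).1 < (q t).2 then q t else ((q t).2, (q t).1)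
      with he
    have hePset : ∀ t, e t ∈ Pset n := by
      intro t
      simp only [he, Pset]
      by_cases hlt : (q t).1 < (q t).2
      · rw [if_pos hlt]
        rw [Finset.mem_filter, Finset.mem_product]
        exact ⟨⟨(hs1 t).1, (hs2 t).1⟩, hlt⟩
      · rw [if_neg hlt]
        rw [Finset.mem_filter, Finset.mem_product]
        refine ⟨⟨(hs2 t).1, (hs1 t).1⟩, ?_⟩
        exact lt_of_le_of_ne (not_lt.mp hlt) (Ne.symm ((hmem t).2.2))
    have hsV : ∀ t, s (e t).1 = y t ∧ s (e t).2 = y t := by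
      intro t
      simp only [he]
      by_cases hlt : (q t).1 < (q t).2
      · rw [if_pos hlt]; exact ⟨(hs1 t).2, (hs2 t).2⟩
      · rw [if_neg hlt]; exact ⟨(hs2 t).2, (hs1 t).2⟩
    have heltne : ∀ t, (e t).1 ≠ (e t).2 := by
      intro t
      have := hePset t
      rw [Pset, Finset.mem_filter] at this
      exact ne_of_lt this.2
    refine ⟨Fintype.mem_piFinset.mpr hePset, ?_, ?_⟩
    · -- injectivity of Vf e
      intro z z' hVeq
      have hsv : ∀ w : Fin m × Fin 2, s (Vf e w) = y w.1 := by
        rintro ⟨t, b⟩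
        rcases fin2_cases b with hb | hb
        · rw [hb, Vf]; simp only [if_pos rfl]; exact (hsV t).1
        · rw [hb, Vf]; simp only []
          have : ((t, (1:Fin 2)).2 = 0) = False := by simp
          rw [if_neg (by simp)]
          exact (hsV t).2
      have hy1 : y z.1 = y z'.1 := by rw [← hsv z, ← hsv z', hVeq]
      have hz1 : z.1 = z'.1 := hy.2 hy1
      have hz2 : z.2 = z'.2 := by
        by_contra hne
        rcases fin2_cases z.2 with h1 | h1 <;> rcases fin2_cases z'.2 with h2 | h2
        · exact hne (h1.trans h2.symm)
        · apply heltne z'.1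
          have : Vf e (z.1, 0) = Vf e (z'.1, 1) := by
            rw [← h1, ← h2]
            rw [show (z.1, z.2) = z from rfl, show (z'.1, z'.2) = z' from rfl]
            exact hVeq
          rw [hz1] at this
          rw [Vf, Vf] at this
          simpa using this
        · apply heltne z'.1
          have : Vf e (z.1, 1) = Vf e (z'.1, 0) := by
            rw [← h1, ← h2]
            rw [show (z.1, z.2) = z from rfl, show (z'.1, z'.2) = z' from rfl]
            exact hVeq
          rw [hz1] at this
          rw [Vf, Vf] at this
          simp at this
          exact this.symm
        · exact hne (h1.trans h2.symm)
      exact Prod.ext hz1 hz2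
    · intro t
      rw [(hsV t).1, (hsV t).2]
  · -- injectivity
    rintro ⟨y, q⟩ hz ⟨y', q'⟩ hz' heq
    simp only [Finset.coe_sigma, Set.mem_sigma_iff] at hz hz'
    have hb := congrFun (congrArg Prod.fst heq) 
    have he := congrFun (congrArg Prod.snd heq)
    have hqq : q = q' := by
      funext t
      have hbt := hb t
      have het := he t
      simp only [hf] at hbt het
      by_cases hlt : (q t).1 < (q t).2
      · have hlt' : (q' t).1 < (q' t).2 := by
          by_contra hn
          rw [if_pos hlt, if_neg hn] at hbt
          exact absurd hbt (by decide)
        rw [if_pos hlt, if_pos hlt'] at het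
        exact het
      · have hlt' : ¬ (q' t).1 < (q' t).2 := by
          by_contra hn
          rw [if_neg hlt, if_pos hn] at hbt
          exact absurd hbt (by decide)
        rw [if_neg hlt, if_neg hlt'] at het
        have h1 : (q t).2 = (q' t).2 := congrArg Prod.fst het
        have h2 : (q t).1 = (q' t).1 := congrArg Prod.snd het
        exact Prod.ext h2 h1
    have hyy : y = y' := by
      funext k
      have h1 : (q k).1 ∈ L (y k) := by
        have := Fintype.mem_piFinset.mp hz.2 k
        exact (Finset.mem_offDiag.mp this).1
      have h2 : (q' k).1 ∈ L (y' k) := by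
        have := Fintype.mem_piFinset.mp hz'.2 k
        exact (Finset.mem_offDiag.mp this).1
      have e1 : s (q k).1 = y k := (Finset.mem_filter.mp h1).2
      have e2 : s (q' k).1 = y' k := (Finset.mem_filter.mp h2).2
      rw [← e1, ← e2, hqq]
    subst hyy
    subst hqq
    rfl

lemma mult_good {m : ℕ} (e : Fin m → ℕ × ℕ) (he : Function.Injective (Vf e))
    (σ : Equiv.Perm (Fin m × Fin 2)) {r : ℕ}
    (hr : r ∈ (univ : Finset ((Fin m × Fin 2) × Fin 2)).image (Vf (fun i => e ((σ i).1)))) :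
    ((univ : Finset ((Fin m × Fin 2) × Fin 2)).filter
      (fun z => Vf (fun i => e ((σ i).1)) z = r)).card = 2 := by
  classical
  have hVg : ∀ z : (Fin m × Fin 2) × Fin 2,
      Vf (fun i => e ((σ i).1)) z = Vf e ((σ z.1).1, z.2) := by
    intro z
    rcases fin2_cases z.2 with h | h <;> simp [Vf, h]
  obtain ⟨z₀, _, hz₀⟩ := Finset.mem_image.mp hr
  have hrj : r = Vf e ((σ z₀.1).1, z₀.2) := by rw [← hz₀, hVg]
  have hfilter : ((univ : Finset ((Fin m × Fin 2) × Fin 2)).filter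
        (fun z => Vf (fun i => e ((σ i).1)) z = r))
      = univ.filter (fun z : (Fin m × Fin 2) × Fin 2 =>
          (σ z.1).1 = (σ z₀.1).1 ∧ z.2 = z₀.2) := by
    ext z
    simp only [mem_filter, mem_univ, true_and]
    rw [hVg, hrj]
    constructor
    · intro h
      have h2 := he h
      exact Prod.ext_iff.mp h2
    · rintro ⟨h1, h2⟩
      rw [show ((σ z.1).1, z.2) = ((σ z₀.1).1, z₀.2) from Prod.ext h1 h2]
  rw [hfilter]
  have hsplit : (univ.filter (fun z : (Fin m × Fin 2) × Fin 2 =>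
        (σ z.1).1 = (σ z₀.1).1 ∧ z.2 = z₀.2))
      = (univ.filter (fun i : Fin m × Fin 2 => (σ i).1 = (σ z₀.1).1))
          ×ˢ ({z₀.2} : Finset (Fin 2)) := by
    ext ⟨i, v⟩
    simp only [mem_filter, mem_univ, true_and, Finset.mem_product, Finset.mem_singleton]
  rw [hsplit, Finset.card_product, Finset.card_singleton, Nat.mul_one]
  have hbij : (univ.filter (fun i : Fin m × Fin 2 => (σ i).1 = (σ z₀.1).1)).card
      = (univ.filter (fun i : Fin m × Fin 2 => i.1 = (σ z₀.1).1)).card := by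
    apply Finset.card_nbij (fun i => σ i)
    · intro i hi
      simp only [Finset.mem_coe, Finset.mem_filter, Finset.mem_univ, true_and] at hi ⊢
      exact hi
    · intro i _ i' _ h
      exact σ.injective h
    · intro i hi
      simp only [Finset.mem_coe, Finset.mem_filter, Finset.mem_univ, true_and] at hi
      refine ⟨σ.symm i, ?_, by simp⟩
      simp only [Finset.mem_coe, Finset.mem_filter, Finset.mem_univ, true_and,
        Equiv.apply_symm_apply]
      exact hi
  rw [hbij]
  have hone : (univ.filter (fun i : Fin m × Fin 2 => i.1 = (σ z₀.1).1))
      = ({(σ z₀.1).1} : Finset (Fin m)) ×ˢ (univ : Finset (Fin 2)) := by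
    ext ⟨u, v⟩
    simp [Finset.mem_product, eq_comm]
  rw [hone, Finset.card_product, Finset.card_singleton, card_univ]
  simp

open MeasureTheory ProbabilityTheory Filter Finset

/-- **Lower bound on even moments of the truncated energy
(Proposition 2.1, inequality (2.8)):** `E[H̃_n^{2m}] ≥ ((2m)!/(2^{2m} m!)) A_m(n)`. -/
theorem truncated_energy_moment_lower_bound
    {Ω : Type*} [MeasurableSpace Ω] (μ : Measure Ω) [IsProbabilityMeasure μ]
    (d : ℕ) (hd : 1 ≤ d)
    (X : ℕ → Ω → (Fin d → ℤ)) (W : ℕ → Ω → ℝ)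
    (hXmeas : ∀ i, Measurable (X i)) (hWmeas : ∀ i, Measurable (W i))
    (hXindep : iIndepFun X μ)
    (hXident : ∀ i, Measure.map (X i) μ = Measure.map (X 1) μ)
    (hXsymm : Measure.map (X 1) μ = Measure.map (fun ω => -(X 1 ω)) μ)
    (hXsupp : AddSubgroup.closure {x : Fin d → ℤ | μ {ω | X 1 ω = x} ≠ 0} = ⊤)
    (hXmom : ∀ a b : Fin d, Integrable (fun ω => ((X 1 ω a : ℝ) * (X 1 ω b : ℝ))) μ)
    (hWindep : iIndepFun W μ)
    (hWident : ∀ i, Measure.map (W i) μ = Measure.map (W 1) μ)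
    (hWsymm : Measure.map (W 1) μ = Measure.map (fun ω => -(W 1 ω)) μ)
    (hWmom : ∫ ω, (W 1 ω) ^ 2 ∂μ = 1)
    (hWexp : ∃ l0 > 0, Integrable (fun ω => Real.exp (l0 * (W 1 ω) ^ 2)) μ)
    (hXW : IndepFun (fun ω i => X i ω) (fun ω i => W i ω) μ)
    (S : ℕ → Ω → (Fin d → ℤ)) (hS : ∀ n ω, S n ω = ∑ i ∈ Finset.range n, X (i + 1) ω)
    (H : ℕ → Ω → ℝ)
    (hH : ∀ n ω, H n ω = ∑ j ∈ Finset.Icc 1 n, ∑ k ∈ Finset.Icc 1 n,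
        if j < k ∧ S j ω = S k ω then W j ω * W k ω else 0)
    (lt : ℕ → (Fin d → ℤ) → Ω → ℕ)
    (hlt : ∀ n x ω, lt n x ω = ((Finset.Icc 1 n).filter (fun k => S k ω = x)).card)
    (Ht : ℕ → ℝ → Ω → ℝ)
    (hHt : ∀ n K, Ht n K = Set.indicator {ω | ∀ x, (lt n x ω : ℝ) ≤ K} (H n))
    (A : ℕ → ℕ → ℝ → ℝ)
    (hA : ∀ m n K, A m n K = (2 : ℝ)⁻¹ ^ m * ∑' y : Fin m → (Fin d → ℤ),
      Set.indicator {y : Fin m → (Fin d → ℤ) | Function.Injective y}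
        (fun y => ∫ ω, Set.indicator {ω' | ∀ x, (lt n x ω' : ℝ) ≤ K}
          (fun ω' => ∏ k : Fin m, ((lt n (y k) ω' : ℝ) * ((lt n (y k) ω' : ℝ) - 1))) ω ∂μ) y) :
    ∀ m n : ℕ, 1 ≤ m → 1 ≤ n → ∀ K : ℝ, 0 < K →
      ((2 * m).factorial : ℝ) / (2 ^ (2 * m) * (m.factorial : ℝ)) * A m n K
        ≤ ∫ ω, (Ht n K ω) ^ (2 * m) ∂μ := by
  classical
  intro m n hm hn K hK
  -- basic definitions
  set E : Set Ω := {ω | ∀ x, (lt n x ω : ℝ) ≤ K} with hE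
  set ind : Ω → ℝ := fun ω => Set.indicator E (fun _ => (1:ℝ)) ω with hind
  set a : ℕ × ℕ → Ω → ℝ := fun p ω => if S p.1 ω = S p.2 ω then 1 else 0 with ha
  set G : Finset ((Fin m × Fin 2) → ℕ × ℕ) :=
    Fintype.piFinset (fun _ : Fin m × Fin 2 => Pset n) with hG
  set D : Finset (Fin m → ℕ × ℕ) :=
    (Fintype.piFinset fun _ : Fin m => Pset n).filter
      (fun e => Function.Injective (Vf e)) with hD
  set Mom : ℕ → ℝ := fun c => ∫ ω, W 1 ω ^ c ∂μ with hMom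
  set TermE : (Fin m → ℕ × ℕ) → ℝ :=
    fun e => ∫ ω, ind ω * ∏ t : Fin m, a (e t) ω ∂μ with hTermE
  set TermX : ((Fin m × Fin 2) → ℕ × ℕ) → ℝ :=
    fun g => ∫ ω, ind ω * ∏ i : Fin m × Fin 2, a (g i) ω ∂μ with hTermX
  set mult : ((Fin m × Fin 2) → ℕ × ℕ) → ℕ → ℕ :=
    fun g r => ((univ : Finset ((Fin m × Fin 2) × Fin 2)).filter
      (fun z => Vf g z = r)).card with hmult
  set Term : ((Fin m × Fin 2) → ℕ × ℕ) → ℝ :=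
    fun g => TermX g * ∏ r ∈ (univ : Finset ((Fin m × Fin 2) × Fin 2)).image (Vf g),
      Mom (mult g r) with hTerm
  -- measurability
  have hSm : ∀ k, Measurable (S k) := by
    intro k
    have h1 : S k = fun ω => ∑ i ∈ Finset.range k, X (i + 1) ω := funext (hS k)
    rw [h1]
    exact Finset.measurable_sum _ (fun i _ => hXmeas (i + 1))
  have hltm : ∀ x, Measurable (fun ω => lt n x ω) := by
    intro x
    have h1 : (fun ω => lt n x ω)
        = fun ω => ∑ k ∈ Finset.Icc 1 n, if S k ω = x then 1 else 0 := by
      funext ω; rw [hlt, Finset.card_filter]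
    rw [h1]
    exact Finset.measurable_sum _ (fun k _ =>
      Measurable.ite (measurableSet_eq_fun (hSm k) measurable_const)
        measurable_const measurable_const)
  have hEm : MeasurableSet E := by
    have h1 : E = ⋂ x : Fin d → ℤ, {ω | (lt n x ω : ℝ) ≤ K} := by
      ext ω; simp only [hE, Set.mem_setOf_eq, Set.mem_iInter]
    rw [h1]
    exact MeasurableSet.iInter fun x =>
      measurableSet_le (measurable_from_top.comp (hltm x)) measurable_const
  have haM : ∀ p, Measurable (a p) := by
    intro p
    exact Measurable.ite (measurableSet_eq_fun (hSm p.1) (hSm p.2))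
      measurable_const measurable_const
  have hindM : Measurable ind := by
    exact measurable_const.indicator hEm
  have hind01 : ∀ ω, ind ω = 0 ∨ ind ω = 1 := by
    intro ω
    by_cases h : ω ∈ E
    · right; simp [hind, Set.indicator_of_mem h]
    · left; simp [hind, Set.indicator_of_notMem h]
  have ha01 : ∀ p ω, a p ω = 0 ∨ a p ω = 1 := by
    intro p ω
    simp only [ha]
    by_cases h : S p.1 ω = S p.2 ω
    · right; rw [if_pos h]
    · left; rw [if_neg h]
  -- moments of the noise
  have hWc : ∀ r c, Integrable (fun ω => W r ω ^ c) μ := by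
    intro r c
    obtain ⟨l0, hl0, hintexp⟩ := hWexp
    exact aux_map_pow_integrable (W r) (W 1) (hWmeas r) (hWmeas 1) (hWident r) c
      (aux_pow_integrable μ (W 1) (hWmeas 1) hl0 hintexp c)
  have hMomr : ∀ r c, ∫ ω, W r ω ^ c ∂μ = Mom c := by
    intro r c
    simp only [hMom]
    exact aux_map_pow_integral (W r) (W 1) (hWmeas r) (hWmeas 1) (hWident r) c
  have hMomNN : ∀ c, 0 ≤ Mom c := by
    intro c
    rcases Nat.even_or_odd c with hc | hc
    · simp only [hMom]
      exact integral_nonneg fun ω => hc.pow_nonneg (W 1 ω)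
    · simp only [hMom]
      rw [aux_odd_moment_zero (W 1) (hWmeas 1) hWsymm hc]
  have hMom2 : Mom 2 = 1 := by
    simp only [hMom]; exact hWmom
  have hprodW : ∀ (s : Finset ℕ) (Ec : ℕ → ℕ),
      Integrable (fun ω => ∏ r ∈ s, W r ω ^ Ec r) μ ∧
        ∫ ω, ∏ r ∈ s, W r ω ^ Ec r ∂μ = ∏ r ∈ s, Mom (Ec r) := by
    intro s Ec
    have hiid : iIndepFun (fun r => fun ω => W r ω ^ Ec r) μ :=
      hWindep.comp (fun r (x : ℝ) => x ^ Ec r) (fun r => measurable_id.pow_const (Ec r))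
    have hh := aux_prod_integral μ (fun r => fun ω => W r ω ^ Ec r) hiid
      (fun r => (hWmeas r).pow_const (Ec r)) (fun r => hWc r (Ec r)) s
    refine ⟨hh.1, ?_⟩
    rw [hh.2]
    exact Finset.prod_congr rfl (fun r _ => hMomr r (Ec r))
  -- nonnegativity and boundedness of the X-side factor
  have hXfac01 : ∀ (gg : (Fin m × Fin 2) → ℕ × ℕ) (ω : Ω),
      0 ≤ ind ω * ∏ i : Fin m × Fin 2, a (gg i) ω ∧
      ind ω * ∏ i : Fin m × Fin 2, a (gg i) ω ≤ 1 := by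
    intro gg ω
    have h1 : 0 ≤ ind ω := by rcases hind01 ω with h | h <;> rw [h] <;> norm_num
    have h2 : ind ω ≤ 1 := by rcases hind01 ω with h | h <;> rw [h] <;> norm_num
    have h3 : 0 ≤ ∏ i : Fin m × Fin 2, a (gg i) ω :=
      Finset.prod_nonneg fun i _ => by rcases ha01 (gg i) ω with h | h <;> rw [h] <;> norm_num
    have h4 : ∏ i : Fin m × Fin 2, a (gg i) ω ≤ 1 :=
      Finset.prod_le_one (fun i _ => by rcases ha01 (gg i) ω with h | h <;> rw [h] <;> norm_num)
        (fun i _ => by rcases ha01 (gg i) ω with h | h <;> rw [h] <;> norm_num)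
    refine ⟨mul_nonneg h1 h3, ?_⟩
    have h5 := mul_le_mul h2 h4 h3 zero_le_one
    simpa using h5
  have hAmeas : ∀ (gg : (Fin m × Fin 2) → ℕ × ℕ),
      Measurable (fun ω => ind ω * ∏ i : Fin m × Fin 2, a (gg i) ω) :=
    fun gg => hindM.mul (Finset.measurable_prod _ fun i _ => haM (gg i))
  have hIA : ∀ (gg : (Fin m × Fin 2) → ℕ × ℕ),
      Integrable (fun ω => ind ω * ∏ i : Fin m × Fin 2, a (gg i) ω) μ := by
    intro gg
    refine Integrable.mono' (integrable_const (1:ℝ)) (hAmeas gg).aestronglyMeasurable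
      (ae_of_all _ fun ω => ?_)
    rw [Real.norm_eq_abs, abs_of_nonneg (hXfac01 gg ω).1]
    exact (hXfac01 gg ω).2
  -- the product of the noise over a tuple, rewritten by multiplicities
  have hWWrw : ∀ (gg : (Fin m × Fin 2) → ℕ × ℕ) (ω : Ω),
      (∏ i : Fin m × Fin 2, (W (gg i).1 ω * W (gg i).2 ω))
        = ∏ r ∈ (univ : Finset ((Fin m × Fin 2) × Fin 2)).image (Vf gg),
            W r ω ^ (mult gg r) := by
    intro gg ω
    have step1 : ∏ z : (Fin m × Fin 2) × Fin 2, W (Vf gg z) ω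
        = ∏ i : Fin m × Fin 2, (W (gg i).1 ω * W (gg i).2 ω) := by
      rw [Fintype.prod_prod_type]
      apply Finset.prod_congr rfl
      intro i _
      rw [Fin.prod_univ_two]
      simp [Vf]
    rw [← step1]
    simp only [hmult]
    exact Finset.prod_comp (fun r => W r ω) (Vf gg)
  -- factorization of each term
  have hsumm : ∀ k, Measurable (fun x : ℕ → Fin d → ℤ => ∑ j ∈ Finset.range k, x (j + 1)) :=
    fun k => Finset.measurable_sum _ fun j _ => measurable_pi_apply (j + 1)
  have hfact : ∀ gg : (Fin m × Fin 2) → ℕ × ℕ,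
      ∫ ω, (ind ω * ∏ i : Fin m × Fin 2, a (gg i) ω) *
          (∏ i : Fin m × Fin 2, (W (gg i).1 ω * W (gg i).2 ω)) ∂μ = Term gg := by
    intro gg
    set B : Ω → ℝ := fun ω => ∏ r ∈ (univ : Finset ((Fin m × Fin 2) × Fin 2)).image (Vf gg),
        W r ω ^ (mult gg r) with hB
    have heq1 : (fun ω => (ind ω * ∏ i : Fin m × Fin 2, a (gg i) ω) *
          (∏ i : Fin m × Fin 2, (W (gg i).1 ω * W (gg i).2 ω)))
        = fun ω => (ind ω * ∏ i : Fin m × Fin 2, a (gg i) ω) * B ω := by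
      funext ω; rw [hWWrw gg ω, hB]
    set Fm : (ℕ → (Fin d → ℤ)) → ℝ := fun x =>
      Set.indicator {x' : ℕ → Fin d → ℤ | ∀ site : Fin d → ℤ,
          (((Finset.Icc 1 n).filter
            (fun k => (∑ j ∈ Finset.range k, x' (j + 1)) = site)).card : ℝ) ≤ K}
        (fun _ => (1:ℝ)) x *
      ∏ i : Fin m × Fin 2,
        (if (∑ j ∈ Finset.range (gg i).1, x (j + 1))
            = (∑ j ∈ Finset.range (gg i).2, x (j + 1)) then (1:ℝ) else 0) with hFm
    set Gm : (ℕ → ℝ) → ℝ := fun w =>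
      ∏ r ∈ (univ : Finset ((Fin m × Fin 2) × Fin 2)).image (Vf gg),
        (w r) ^ (mult gg r) with hGm
    have hFmmeas : Measurable Fm := by
      rw [hFm]
      apply Measurable.mul
      · apply measurable_const.indicator
        rw [Set.setOf_forall]
        apply MeasurableSet.iInter
        intro site
        apply measurableSet_le _ measurable_const
        have hcm : Measurable (fun x' : ℕ → Fin d → ℤ =>
            ((((Finset.Icc 1 n).filter
              (fun k => (∑ j ∈ Finset.range k, x' (j + 1)) = site)).card : ℕ))) := by
          have hcf : (fun x' : ℕ → Fin d → ℤ =>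
              ((((Finset.Icc 1 n).filter
                (fun k => (∑ j ∈ Finset.range k, x' (j + 1)) = site)).card : ℕ)))
              = fun x' => ∑ k ∈ Finset.Icc 1 n,
                  if (∑ j ∈ Finset.range k, x' (j + 1)) = site then 1 else 0 := by
            funext x'; rw [Finset.card_filter]
          rw [hcf]
          exact Finset.measurable_sum _ fun k _ =>
            Measurable.ite (measurableSet_eq_fun (hsumm k) measurable_const)
              measurable_const measurable_const
        exact measurable_from_top.comp hcm
      · exact Finset.measurable_prod _ fun i _ =>
          Measurable.ite
            (measurableSet_eq_fun (hsumm (gg i).1) (hsumm (gg i).2))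
            measurable_const measurable_const
    have hGmmeas : Measurable Gm := by
      rw [hGm]
      exact Finset.measurable_prod _ fun r _ => (measurable_pi_apply r).pow_const _
    have hAeq : (fun ω => ind ω * ∏ i : Fin m × Fin 2, a (gg i) ω)
        = Fm ∘ (fun ω i => X i ω) := by
      funext ω
      simp only [Function.comp_apply, hFm, hind, ha]
      have hiff : ω ∈ E ↔ (∀ site : Fin d → ℤ,
          (((Finset.Icc 1 n).filter
            (fun k => (∑ j ∈ Finset.range k, X (j + 1) ω) = site)).card : ℝ) ≤ K) := by
        simp only [hE, Set.mem_setOf_eq]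
        have hfe : ∀ site : Fin d → ℤ, lt n site ω
            = ((Finset.Icc 1 n).filter
                (fun k => (∑ j ∈ Finset.range k, X (j + 1) ω) = site)).card := by
          intro site
          rw [hlt]
          congr 1
          apply Finset.filter_congr
          intro k _
          rw [hS k ω]
        constructor
        · intro h site; rw [← hfe site]; exact h site
        · intro h site; rw [hfe site]; exact h site
      congr 1
      · rw [Set.indicator_apply, Set.indicator_apply]
        refine if_congr ?_ rfl rfl
        rw [Set.mem_setOf_eq]
        exact hiff
      · apply Finset.prod_congr rfl
        intro i _
        rw [hS (gg i).1 ω, hS (gg i).2 ω]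
    have hBeq : B = Gm ∘ (fun ω i => W i ω) := by
      funext ω; simp only [hB, hGm, Function.comp_apply]
    have hIndep : IndepFun (fun ω => ind ω * ∏ i : Fin m × Fin 2, a (gg i) ω) B μ := by
      rw [hAeq, hBeq]
      exact hXW.comp hFmmeas hGmmeas
    have hIB : Integrable B μ := by
      rw [hB]; exact (hprodW _ _).1
    rw [heq1]
    have hAB : (fun ω => (ind ω * ∏ i : Fin m × Fin 2, a (gg i) ω) * B ω)
        = (fun ω => ind ω * ∏ i : Fin m × Fin 2, a (gg i) ω) * B := rfl
    rw [hAB, hIndep.integral_mul_eq_mul_integral (hIA gg).aestronglyMeasurable hIB.aestronglyMeasurable]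
    simp only [hTerm, hTermX]
    congr 1
    rw [hB]
    exact (hprodW _ _).2
  have hIg : ∀ gg : (Fin m × Fin 2) → ℕ × ℕ,
      Integrable (fun ω => (ind ω * ∏ i : Fin m × Fin 2, a (gg i) ω) *
          (∏ i : Fin m × Fin 2, (W (gg i).1 ω * W (gg i).2 ω))) μ := by
    intro gg
    have heq : (fun ω => (ind ω * ∏ i : Fin m × Fin 2, a (gg i) ω) *
          (∏ i : Fin m × Fin 2, (W (gg i).1 ω * W (gg i).2 ω)))
        = fun ω => (ind ω * ∏ i : Fin m × Fin 2, a (gg i) ω) *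
          (∏ r ∈ (univ : Finset ((Fin m × Fin 2) × Fin 2)).image (Vf gg),
            W r ω ^ (mult gg r)) := by
      funext ω; rw [hWWrw gg ω]
    rw [heq]
    refine Integrable.bdd_mul (hprodW _ _).1 (hAmeas gg).aestronglyMeasurable (c := 1) (ae_of_all _ fun ω => ?_)
    rw [Real.norm_eq_abs, abs_of_nonneg (hXfac01 gg ω).1]
    exact (hXfac01 gg ω).2
  -- expansion of the moment
  have hexp : ∫ ω, (Ht n K ω) ^ (2 * m) ∂μ = ∑ gg ∈ G, Term gg := by
    have hcard2 : (2 * m) = Fintype.card (Fin m × Fin 2) := by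
      rw [Fintype.card_prod, Fintype.card_fin, Fintype.card_fin]; omega
    have h0 : ∀ ω, Ht n K ω ^ (2 * m) = ind ω * H n ω ^ (2 * m) := by
      intro ω
      rw [hHt n K, ← hE]
      by_cases h : ω ∈ E
      · rw [Set.indicator_of_mem h]
        have h10 : ind ω = 1 := by rw [hind]; exact Set.indicator_of_mem h _
        rw [h10, one_mul]
      · rw [Set.indicator_of_notMem h, zero_pow (by omega : 2 * m ≠ 0)]
        have h10 : ind ω = 0 := by rw [hind]; exact Set.indicator_of_notMem h _
        rw [h10, zero_mul]
    have h1 : ∀ ω, H n ω = ∑ p ∈ Pset n, a p ω * (W p.1 ω * W p.2 ω) := by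
      intro ω
      rw [hH n ω, Pset, Finset.sum_filter, Finset.sum_product]
      apply Finset.sum_congr rfl; intro j _
      apply Finset.sum_congr rfl; intro k _
      simp only [ha]
      by_cases hjk : j < k
      · by_cases hseq : S j ω = S k ω
        · simp [hjk, hseq]
        · simp [hjk, hseq]
      · simp [hjk]
    have h2 : ∀ ω, Ht n K ω ^ (2 * m)
        = ∑ gg ∈ G, (ind ω * ∏ i : Fin m × Fin 2, a (gg i) ω) *
            (∏ i : Fin m × Fin 2, (W (gg i).1 ω * W (gg i).2 ω)) := by
      intro ω
      rw [h0 ω, h1 ω]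
      have h3 : (∑ p ∈ Pset n, a p ω * (W p.1 ω * W p.2 ω)) ^ (2 * m)
          = ∏ _i : Fin m × Fin 2, (∑ p ∈ Pset n, a p ω * (W p.1 ω * W p.2 ω)) := by
        rw [Finset.prod_const, card_univ, ← hcard2]
      rw [h3, Finset.prod_univ_sum, hG, Finset.mul_sum]
      apply Finset.sum_congr rfl
      intro gg _
      rw [Finset.prod_mul_distrib]
      ring
    calc ∫ ω, (Ht n K ω) ^ (2 * m) ∂μ
        = ∫ ω, ∑ gg ∈ G, (ind ω * ∏ i : Fin m × Fin 2, a (gg i) ω) *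
            (∏ i : Fin m × Fin 2, (W (gg i).1 ω * W (gg i).2 ω)) ∂μ :=
          congrArg (integral μ) (funext h2)
    _ = ∑ gg ∈ G, ∫ ω, (ind ω * ∏ i : Fin m × Fin 2, a (gg i) ω) *
            (∏ i : Fin m × Fin 2, (W (gg i).1 ω * W (gg i).2 ω)) ∂μ :=
          integral_finset_sum G (fun gg _ => hIg gg)
    _ = ∑ gg ∈ G, Term gg := Finset.sum_congr rfl fun gg _ => hfact gg
  -- nonnegativity
  have hTXnn : ∀ gg, 0 ≤ TermX gg := by
    intro gg
    simp only [hTermX]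
    exact integral_nonneg fun ω => (hXfac01 gg ω).1
  have hTnn : ∀ gg, 0 ≤ Term gg := by
    intro gg
    simp only [hTerm]
    exact mul_nonneg (hTXnn gg) (Finset.prod_nonneg fun r _ => hMomNN _)
  have hTEnn : ∀ e, 0 ≤ TermE e := by
    intro e
    simp only [hTermE]
    apply integral_nonneg
    intro ω
    have h1 : 0 ≤ ind ω := by rcases hind01 ω with h | h <;> rw [h] <;> norm_num
    have h3 : 0 ≤ ∏ t : Fin m, a (e t) ω :=
      Finset.prod_nonneg fun t _ => by rcases ha01 (e t) ω with h | h <;> rw [h] <;> norm_num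
    exact mul_nonneg h1 h3
  have hDinj : ∀ e ∈ D, Function.Injective e := by
    intro e he t t' h
    rw [hD, Finset.mem_filter] at he
    have hV := he.2
    have h2 : Vf e (t, 0) = Vf e (t', 0) := by simp [Vf, h]
    exact congrArg Prod.fst (hV h2)
  -- value of the "good" terms
  have hgood : ∀ e ∈ D, ∀ σ : Equiv.Perm (Fin m × Fin 2),
      Term (fun i => e ((σ i).1)) = TermE e := by
    intro e he σ
    have hVe : Function.Injective (Vf e) := by
      rw [hD, Finset.mem_filter] at he; exact he.2
    have hprod1 : ∏ r ∈ (univ : Finset ((Fin m × Fin 2) × Fin 2)).image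
        (Vf (fun i => e ((σ i).1))), Mom (mult (fun i => e ((σ i).1)) r) = 1 := by
      apply Finset.prod_eq_one
      intro r hr
      have h2 : mult (fun i => e ((σ i).1)) r = 2 := by
        simp only [hmult]
        exact mult_good e hVe σ hr
      rw [h2, hMom2]
    have hTX : TermX (fun i => e ((σ i).1)) = TermE e := by
      simp only [hTermX, hTermE]
      congr 1
      funext ω
      congr 1
      calc ∏ i : Fin m × Fin 2, a (e ((σ i).1)) ω
          = ∏ i : Fin m × Fin 2, a (e i.1) ω := Equiv.prod_comp σ (fun i => a (e i.1) ω)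
        _ = ∏ t : Fin m, (a (e t) ω * a (e t) ω) := by
            rw [Fintype.prod_prod_type]
            exact Finset.prod_congr rfl fun t _ => Fin.prod_univ_two _
        _ = ∏ t : Fin m, a (e t) ω := by
            apply Finset.prod_congr rfl
            intro t _
            rcases ha01 (e t) ω with h | h <;> rw [h] <;> norm_num
    simp only [hTerm]
    rw [hTX, hprod1, mul_one]
  have hGmem : ∀ e ∈ D, ∀ σ : Equiv.Perm (Fin m × Fin 2),
      (fun i => e ((σ i).1)) ∈ G := by
    intro e he σ
    rw [hD, Finset.mem_filter] at he
    have h1 := Fintype.mem_piFinset.mp he.1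
    rw [hG]
    exact Fintype.mem_piFinset.mpr fun i => h1 ((σ i).1)
  have hcount : ((2 * m).factorial : ℝ) * ∑ e ∈ D, TermE e
      ≤ 2 ^ m * (m.factorial : ℝ) * ∑ gg ∈ G, Term gg :=
    count_le D hDinj G Term hTnn TermE hgood hGmem
  -- the tsum bound
  have hindnng : ∀ ω, 0 ≤ ind ω := by
    intro ω; rcases hind01 ω with h | h <;> rw [h] <;> norm_num
  have hindle1 : ∀ ω, ind ω ≤ 1 := by
    intro ω; rcases hind01 ω with h | h <;> rw [h] <;> norm_num
  have hindmul : ∀ (f : Ω → ℝ) (ω : Ω), Set.indicator E f ω = ind ω * f ω := by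
    intro f ω
    by_cases h : ω ∈ E
    · rw [Set.indicator_of_mem h]
      have h1 : ind ω = 1 := by rw [hind]; exact Set.indicator_of_mem h _
      rw [h1, one_mul]
    · rw [Set.indicator_of_notMem h]
      have h1 : ind ω = 0 := by rw [hind]; exact Set.indicator_of_notMem h _
      rw [h1, zero_mul]
  have hlR : ∀ (v : Fin d → ℤ) (ω : Ω),
      (lt n v ω : ℝ) * ((lt n v ω : ℝ) - 1)
        = ((((Finset.Icc 1 n).filter (fun k => S k ω = v)).offDiag.card : ℕ) : ℝ) := by
    intro v ω
    rw [Finset.offDiag_card, ← hlt n v ω]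
    rcases Nat.eq_zero_or_pos (lt n v ω) with h | h
    · rw [h]; norm_num
    · have hcc : lt n v ω ≤ lt n v ω * lt n v ω := Nat.le_mul_of_pos_left _ h
      rw [Nat.cast_sub hcc]
      push_cast
      ring
  have hprodnn : ∀ (y : Fin m → Fin d → ℤ) (ω : Ω),
      0 ≤ ∏ k : Fin m, ((lt n (y k) ω : ℝ) * ((lt n (y k) ω : ℝ) - 1)) := by
    intro y ω
    apply Finset.prod_nonneg
    intro k _
    rcases Nat.eq_zero_or_pos (lt n (y k) ω) with h | h
    · rw [h]; norm_num
    · have h1 : (1:ℝ) ≤ (lt n (y k) ω : ℝ) := by exact_mod_cast h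
      nlinarith
  have hprodbd : ∀ (y : Fin m → Fin d → ℤ) (ω : Ω),
      ∏ k : Fin m, ((lt n (y k) ω : ℝ) * ((lt n (y k) ω : ℝ) - 1)) ≤ ((n:ℝ)^2)^m := by
    intro y ω
    have h1 : ∀ k : Fin m, (lt n (y k) ω : ℝ) ≤ (n:ℝ) := by
      intro k
      have h2 : lt n (y k) ω ≤ n := by
        rw [hlt]
        calc ((Finset.Icc 1 n).filter (fun k' => S k' ω = y k)).card
            ≤ (Finset.Icc 1 n).card := Finset.card_filter_le _ _
        _ = n := by rw [Nat.card_Icc]; omega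
      exact_mod_cast h2
    calc ∏ k : Fin m, ((lt n (y k) ω : ℝ) * ((lt n (y k) ω : ℝ) - 1))
        ≤ ∏ _k : Fin m, (n:ℝ)^2 := by
          apply Finset.prod_le_prod
          · intro k _
            rcases Nat.eq_zero_or_pos (lt n (y k) ω) with h | h
            · rw [h]; norm_num
            · have h2 : (1:ℝ) ≤ (lt n (y k) ω : ℝ) := by exact_mod_cast h
              nlinarith
          · intro k _
            have h0 : (0:ℝ) ≤ (lt n (y k) ω : ℝ) := by positivity
            have h3 := h1 k
            nlinarith
    _ = ((n:ℝ)^2)^m := by rw [Finset.prod_const, card_univ, Fintype.card_fin]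
  have hψmeas : ∀ y : Fin m → Fin d → ℤ, Measurable (fun ω => ind ω *
      ∏ k : Fin m, ((lt n (y k) ω : ℝ) * ((lt n (y k) ω : ℝ) - 1))) := by
    intro y
    apply hindM.mul
    apply Finset.measurable_prod
    intro k _
    have hm1 : Measurable (fun ω => (lt n (y k) ω : ℝ)) :=
      measurable_from_top.comp (hltm (y k))
    exact hm1.mul (hm1.sub measurable_const)
  have hψint : ∀ y : Fin m → Fin d → ℤ, Integrable (fun ω => ind ω *
      ∏ k : Fin m, ((lt n (y k) ω : ℝ) * ((lt n (y k) ω : ℝ) - 1))) μ := by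
    intro y
    refine Integrable.mono' (integrable_const (((n:ℝ)^2)^m)) (hψmeas y).aestronglyMeasurable
      (ae_of_all _ fun ω => ?_)
    rw [Real.norm_eq_abs, abs_of_nonneg (mul_nonneg (hindnng ω) (hprodnn y ω))]
    have h3 := hprodbd y ω
    have h4 := hprodnn y ω
    have h2 := hindle1 ω
    nlinarith
  have hIAE : ∀ e : Fin m → ℕ × ℕ,
      Integrable (fun ω => ind ω * ∏ t : Fin m, a (e t) ω) μ := by
    intro e
    have hmeas : Measurable (fun ω => ind ω * ∏ t : Fin m, a (e t) ω) :=
      hindM.mul (Finset.measurable_prod _ fun t _ => haM (e t))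
    refine Integrable.mono' (integrable_const (1:ℝ)) hmeas.aestronglyMeasurable
      (ae_of_all _ fun ω => ?_)
    have h3 : 0 ≤ ∏ t : Fin m, a (e t) ω :=
      Finset.prod_nonneg fun t _ => by rcases ha01 (e t) ω with h | h <;> rw [h] <;> norm_num
    have h4 : ∏ t : Fin m, a (e t) ω ≤ 1 :=
      Finset.prod_le_one (fun t _ => by rcases ha01 (e t) ω with h | h <;> rw [h] <;> norm_num)
        (fun t _ => by rcases ha01 (e t) ω with h | h <;> rw [h] <;> norm_num)
    rw [Real.norm_eq_abs, abs_of_nonneg (mul_nonneg (hindnng ω) h3)]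
    have h2 := hindle1 ω
    have h1 := hindnng ω
    nlinarith
  have hTy : (∑' y : Fin m → (Fin d → ℤ),
      Set.indicator {y : Fin m → (Fin d → ℤ) | Function.Injective y}
        (fun y => ∫ ω, Set.indicator {ω' | ∀ x, (lt n x ω' : ℝ) ≤ K}
          (fun ω' => ∏ k : Fin m, ((lt n (y k) ω' : ℝ) * ((lt n (y k) ω' : ℝ) - 1))) ω ∂μ) y)
      ≤ 2 ^ m * ∑ e ∈ D, TermE e := by
    set φ : (Fin m → Fin d → ℤ) → ℝ := fun y =>
      Set.indicator {y : Fin m → (Fin d → ℤ) | Function.Injective y}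
        (fun y => ∫ ω, Set.indicator {ω' | ∀ x, (lt n x ω' : ℝ) ≤ K}
          (fun ω' => ∏ k : Fin m, ((lt n (y k) ω' : ℝ) * ((lt n (y k) ω' : ℝ) - 1))) ω ∂μ) y
      with hφ
    have hφval : ∀ y : Fin m → Fin d → ℤ, Function.Injective y →
        φ y = ∫ ω, ind ω *
          ∏ k : Fin m, ((lt n (y k) ω : ℝ) * ((lt n (y k) ω : ℝ) - 1)) ∂μ := by
      intro y hy
      have hy' : y ∈ {y : Fin m → Fin d → ℤ | Function.Injective y} := hy
      rw [hφ]
      simp only []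
      rw [Set.indicator_of_mem hy', ← hE]
      exact congrArg (integral μ) (funext fun ω => hindmul _ ω)
    have hφ0 : ∀ y : Fin m → Fin d → ℤ, ¬ Function.Injective y → φ y = 0 := by
      intro y hy
      have hy' : y ∉ {y : Fin m → Fin d → ℤ | Function.Injective y} := hy
      rw [hφ]
      simp only []
      exact Set.indicator_of_notMem hy' _
    have hsumF : ∀ Fy : Finset (Fin m → Fin d → ℤ),
        ∑ y ∈ Fy, φ y ≤ 2 ^ m * ∑ e ∈ D, TermE e := by
      intro Fy
      have hsplit : ∑ y ∈ Fy, φ y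
          = ∑ y ∈ Fy.filter (fun y => Function.Injective y), φ y := by
        rw [← Finset.sum_filter_add_sum_filter_not Fy (fun y => Function.Injective y) φ]
        have h6 : ∑ y ∈ Fy.filter (fun y => ¬ Function.Injective y), φ y = 0 :=
          Finset.sum_eq_zero fun y hy => hφ0 y (Finset.mem_filter.mp hy).2
        rw [h6, add_zero]
      rw [hsplit]
      have hstep : ∑ y ∈ Fy.filter (fun y => Function.Injective y), φ y
          = ∫ ω, ∑ y ∈ Fy.filter (fun y => Function.Injective y),
              ind ω * ∏ k : Fin m, ((lt n (y k) ω : ℝ) * ((lt n (y k) ω : ℝ) - 1)) ∂μ := by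
        rw [integral_finset_sum _ (fun y _ => hψint y)]
        apply Finset.sum_congr rfl
        intro y hy
        exact hφval y (Finset.mem_filter.mp hy).2
      rw [hstep]
      have hLint : Integrable (fun ω => ∑ y ∈ Fy.filter (fun y => Function.Injective y),
          ind ω * ∏ k : Fin m, ((lt n (y k) ω : ℝ) * ((lt n (y k) ω : ℝ) - 1))) μ :=
        integrable_finset_sum _ (fun y _ => hψint y)
      have hRint : Integrable (fun ω => 2 ^ m *
          ∑ e ∈ D, (ind ω * ∏ t : Fin m, a (e t) ω)) μ :=
        (integrable_finset_sum D (fun e _ => hIAE e)).const_mul _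
      have hpt : ∀ ω, ∑ y ∈ Fy.filter (fun y => Function.Injective y),
          ind ω * ∏ k : Fin m, ((lt n (y k) ω : ℝ) * ((lt n (y k) ω : ℝ) - 1))
          ≤ 2 ^ m * ∑ e ∈ D, (ind ω * ∏ t : Fin m, a (e t) ω) := by
        intro ω
        rw [← Finset.mul_sum]
        have hR : 2 ^ m * ∑ e ∈ D, (ind ω * ∏ t : Fin m, a (e t) ω)
            = ind ω * (2 ^ m * ∑ e ∈ D, ∏ t : Fin m, a (e t) ω) := by
          rw [← Finset.mul_sum]; ring
        rw [hR]
        apply mul_le_mul_of_nonneg_left _ (hindnng ω)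
        have hcast : ∑ y ∈ Fy.filter (fun y => Function.Injective y),
            ∏ k : Fin m, ((lt n (y k) ω : ℝ) * ((lt n (y k) ω : ℝ) - 1))
            = ((∑ y ∈ Fy.filter (fun y => Function.Injective y),
                ∏ k : Fin m, (((Finset.Icc 1 n).filter
                  (fun j => S j ω = y k)).offDiag.card) : ℕ) : ℝ) := by
          rw [Nat.cast_sum]
          apply Finset.sum_congr rfl; intro y _
          rw [Nat.cast_prod]
          apply Finset.prod_congr rfl; intro k _
          exact hlR (y k) ω
        have hcount2 : ∑ e ∈ D, ∏ t : Fin m, a (e t) ω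
            = (((D.filter (fun e => ∀ t : Fin m, S (e t).1 ω = S (e t).2 ω)).card : ℕ) : ℝ) := by
          have h5 : ∀ e : Fin m → ℕ × ℕ, ∏ t : Fin m, a (e t) ω
              = if (∀ t : Fin m, S (e t).1 ω = S (e t).2 ω) then (1:ℝ) else 0 := by
            intro e
            simp only [ha]
            rw [Finset.prod_boole]
            simp
          rw [Finset.sum_congr rfl (fun e _ => h5 e), Finset.sum_boole]
        have hDfil : D.filter (fun e => ∀ t : Fin m, S (e t).1 ω = S (e t).2 ω)
            = (Fintype.piFinset fun _ : Fin m => Pset n).filter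
                (fun e => Function.Injective (Vf e) ∧
                  ∀ t : Fin m, S (e t).1 ω = S (e t).2 ω) := by
          rw [hD, Finset.filter_filter]
        have hnat := tuple_count (fun j => S j ω) Fy (m := m) (n := n)
        rw [hcast, hcount2, hDfil]
        calc ((∑ y ∈ Fy.filter (fun y => Function.Injective y),
                ∏ k : Fin m, (((Finset.Icc 1 n).filter
                  (fun j => S j ω = y k)).offDiag.card) : ℕ) : ℝ)
            ≤ ((2 ^ m * (((Fintype.piFinset fun _ : Fin m => Pset n).filter
                (fun e => Function.Injective (Vf e) ∧
                  ∀ t : Fin m, S (e t).1 ω = S (e t).2 ω)).card) : ℕ) : ℝ) := by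
              exact_mod_cast hnat
        _ = 2 ^ m * ((((Fintype.piFinset fun _ : Fin m => Pset n).filter
                (fun e => Function.Injective (Vf e) ∧
                  ∀ t : Fin m, S (e t).1 ω = S (e t).2 ω)).card : ℕ) : ℝ) := by
              push_cast; ring
      calc ∫ ω, ∑ y ∈ Fy.filter (fun y => Function.Injective y),
              ind ω * ∏ k : Fin m, ((lt n (y k) ω : ℝ) * ((lt n (y k) ω : ℝ) - 1)) ∂μ
          ≤ ∫ ω, 2 ^ m * ∑ e ∈ D, (ind ω * ∏ t : Fin m, a (e t) ω) ∂μ :=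
            integral_mono hLint hRint hpt
      _ = 2 ^ m * ∑ e ∈ D, TermE e := by
            rw [integral_const_mul, integral_finset_sum D (fun e _ => hIAE e)]
    by_cases hsummable : Summable φ
    · exact Summable.tsum_le_of_sum_le hsummable hsumF
    · rw [tsum_eq_zero_of_not_summable hsummable]
      exact mul_nonneg (by positivity) (Finset.sum_nonneg fun e _ => hTEnn e)
  have hTynn : (0:ℝ) ≤ ∑' y : Fin m → (Fin d → ℤ),
      Set.indicator {y : Fin m → (Fin d → ℤ) | Function.Injective y}
        (fun y => ∫ ω, Set.indicator {ω' | ∀ x, (lt n x ω' : ℝ) ≤ K}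
          (fun ω' => ∏ k : Fin m, ((lt n (y k) ω' : ℝ) * ((lt n (y k) ω' : ℝ) - 1))) ω ∂μ) y := by
    apply tsum_nonneg
    intro y
    apply Set.indicator_apply_nonneg
    intro hy
    apply integral_nonneg
    intro ω
    apply Set.indicator_apply_nonneg
    intro _
    exact hprodnn y ω
  -- final arithmetic
  rw [hA m n K, hexp]
  set Ty := ∑' y : Fin m → (Fin d → ℤ),
      Set.indicator {y : Fin m → (Fin d → ℤ) | Function.Injective y}
        (fun y => ∫ ω, Set.indicator {ω' | ∀ x, (lt n x ω' : ℝ) ≤ K}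
          (fun ω' => ∏ k : Fin m, ((lt n (y k) ω' : ℝ) * ((lt n (y k) ω' : ℝ) - 1))) ω ∂μ) y
    with hTydef
  set SD := ∑ e ∈ D, TermE e with hSD
  set SG := ∑ gg ∈ G, Term gg with hSG
  have hSDnn : 0 ≤ SD := Finset.sum_nonneg fun e _ => hTEnn e
  have hSGnn : 0 ≤ SG := Finset.sum_nonneg fun gg _ => hTnn gg
  have hpos : (0:ℝ) < 2 ^ (2 * m) * (m.factorial : ℝ) := by positivity
  rw [div_mul_eq_mul_div, div_le_iff₀ hpos]
  have h1 : (2:ℝ)⁻¹ ^ m * Ty ≤ SD := by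
    have h2 : (2:ℝ)⁻¹ ^ m * Ty ≤ (2:ℝ)⁻¹ ^ m * (2 ^ m * SD) := by
      apply mul_le_mul_of_nonneg_left hTy (by positivity)
    calc (2:ℝ)⁻¹ ^ m * Ty ≤ (2:ℝ)⁻¹ ^ m * (2 ^ m * SD) := h2
    _ = SD := by
        rw [← mul_assoc, ← mul_pow]
        norm_num
  have hFnn : (0:ℝ) ≤ ((2 * m).factorial : ℝ) := by positivity
  have h3 : ((2 * m).factorial : ℝ) * ((2:ℝ)⁻¹ ^ m * Ty) ≤ 2 ^ m * (m.factorial : ℝ) * SG :=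
    le_trans (mul_le_mul_of_nonneg_left h1 hFnn) hcount
  have h4 : (2:ℝ) ^ m * (m.factorial : ℝ) * SG ≤ SG * (2 ^ (2 * m) * (m.factorial : ℝ)) := by
    have hpow : (2:ℝ) ^ m ≤ 2 ^ (2 * m) :=
      pow_le_pow_right₀ one_le_two (by omega)
    calc (2:ℝ) ^ m * (m.factorial : ℝ) * SG ≤ 2 ^ (2*m) * (m.factorial : ℝ) * SG := by
          apply mul_le_mul_of_nonneg_right _ hSGnn
          exact mul_le_mul_of_nonneg_right hpow (by positivity)
    _ = SG * (2 ^ (2 * m) * (m.factorial : ℝ)) := by ring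
  linarith
end

section
/- For all integers m, n ≥ 1 and every truncation level K > 0, E[Q̃_n^m] ≤ Σ_{l=1}^{m} binom(m,l) (l K²/2)^{m−l} A_l(n). -/
namespace TSILT

variable {α : Type*} [DecidableEq α]

noncomputable def Pinj (V : Finset α) (g : α → ℝ) (l : ℕ) : ℝ :=
  ∑ y ∈ Fintype.piFinset (fun _ : Fin l => V),
    if Function.Injective y then ∏ k, g (y k) else 0

lemma Pinj_nonneg {V : Finset α} {g : α → ℝ} (hg : ∀ x, 0 ≤ g x) (l : ℕ) :
    0 ≤ Pinj V g l := by
  refine Finset.sum_nonneg fun y _ => ?_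
  split
  · exact Finset.prod_nonneg fun k _ => hg _
  · exact le_rfl

lemma Pinj_zero (V : Finset α) (g : α → ℝ) : Pinj V g 0 = 1 := by
  simp [Pinj, Function.injective_of_subsingleton]

lemma Pinj_one (V : Finset α) (g : α → ℝ) : Pinj V g 1 = ∑ x ∈ V, g x := by
  rw [Pinj]
  have : ∀ y ∈ Fintype.piFinset (fun _ : Fin 1 => V),
      (if Function.Injective y then ∏ k, g (y k) else 0) = ∏ k, g (y k) := by
    intro y _
    exact if_pos (Function.injective_of_subsingleton y)
  rw [Finset.sum_congr rfl this, ← Finset.prod_univ_sum]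
  simp

omit [DecidableEq α] in
lemma snoc_injective {l : ℕ} {y : Fin l → α} {x : α} (hy : Function.Injective y)
    (hx : ∀ k, y k ≠ x) : Function.Injective (Fin.snoc y x) := by
  intro a b hab
  rcases Fin.eq_castSucc_or_eq_last a with ⟨a', rfl⟩ | rfl <;>
    rcases Fin.eq_castSucc_or_eq_last b with ⟨b', rfl⟩ | rfl <;>
      simp only [Fin.snoc_castSucc, Fin.snoc_last] at hab
  · exact congrArg Fin.castSucc (hy hab)
  · exact absurd hab (hx a')
  · exact absurd hab.symm (hx b')
  · rfl

omit [DecidableEq α] in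
lemma injective_of_snoc_injective {l : ℕ} {y : Fin l → α} {x : α}
    (h : Function.Injective (Fin.snoc y x)) : Function.Injective y := by
  intro a b hab
  have : (Fin.snoc y x : Fin (l+1) → α) a.castSucc = (Fin.snoc y x : Fin (l+1) → α) b.castSucc := by
    simp [Fin.snoc_castSucc, hab]
  exact Fin.castSucc_injective _ (h this)

set_option maxHeartbeats 1000000 in
lemma Pinj_step (V : Finset α) (g : α → ℝ) (M : ℝ) (l : ℕ)
    (hg : ∀ x, 0 ≤ g x) (hM : ∀ x ∈ V, g x ≤ M) (hM0 : 0 ≤ M) :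
    (∑ x ∈ V, g x) * Pinj V g l ≤ Pinj V g (l + 1) + (l : ℝ) * M * Pinj V g l := by
  classical
  set piF := Fintype.piFinset (fun _ : Fin l => V) with hpiF
  -- split the sum
  have expand : (∑ x ∈ V, g x) * Pinj V g l
      = (∑ y ∈ piF, ∑ x ∈ V.filter (fun x => x ∉ Finset.image y Finset.univ),
          (if Function.Injective y then (∏ k, g (y k)) * g x else 0))
        + ∑ y ∈ piF, ∑ x ∈ V.filter (fun x => ¬ (x ∉ Finset.image y Finset.univ)),
          (if Function.Injective y then (∏ k, g (y k)) * g x else 0) := by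
    rw [mul_comm, Pinj, Finset.sum_mul, ← Finset.sum_add_distrib]
    refine Finset.sum_congr rfl fun y _ => ?_
    rw [Finset.mul_sum,
      Finset.sum_filter_add_sum_filter_not V (fun x => x ∉ Finset.image y Finset.univ)]
    refine Finset.sum_congr rfl fun x _ => ?_
    split <;> simp
  rw [expand]
  have hT1 : (∑ y ∈ piF, ∑ x ∈ V.filter (fun x => x ∉ Finset.image y Finset.univ),
      (if Function.Injective y then (∏ k, g (y k)) * g x else 0)) ≤ Pinj V g (l + 1) := by
    rw [Finset.sum_sigma' (piF) (fun y => V.filter (fun x => x ∉ Finset.image y Finset.univ))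
      (fun y x => if Function.Injective y then (∏ k, g (y k)) * g x else 0)]
    set D := piF.sigma (fun y => V.filter (fun x => x ∉ Finset.image y Finset.univ)) with hD
    have hmem : ∀ p ∈ D, (p.1 : Fin l → α) ∈ piF ∧ p.2 ∈ V ∧ ∀ k, p.1 k ≠ p.2 := by
      rintro ⟨y, x⟩ hp
      rw [hD, Finset.mem_sigma, Finset.mem_filter] at hp
      refine ⟨hp.1, hp.2.1, fun k hk => hp.2.2 ?_⟩
      exact Finset.mem_image.2 ⟨k, Finset.mem_univ k, hk⟩
    have hinj : Set.InjOn (fun p : Σ _ : Fin l → α, α => (Fin.snoc p.1 p.2 : Fin (l+1) → α)) D := by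
      rintro ⟨y, x⟩ _ ⟨y', x'⟩ _ h
      have h1 : y = y' := by
        have := congrArg Fin.init h
        simpa [Fin.init_snoc] using this
      subst h1
      have h2 : x = x' := by
        have := congrArg (fun z => z (Fin.last l)) h
        simpa [Fin.snoc_last] using this
      subst h2; rfl
    have heq : ∀ p ∈ D, (if Function.Injective p.1 then (∏ k, g (p.1 k)) * g p.2 else 0)
        = (if Function.Injective (Fin.snoc p.1 p.2 : Fin (l+1) → α)
            then ∏ k, g ((Fin.snoc p.1 p.2 : Fin (l+1) → α) k) else 0) := by
      rintro ⟨y, x⟩ hp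
      obtain ⟨-, -, hne⟩ := hmem _ hp
      by_cases hy : Function.Injective y
      · rw [if_pos hy, if_pos (snoc_injective hy hne)]
        rw [Fin.prod_univ_castSucc]
        simp [Fin.snoc_castSucc, Fin.snoc_last]
      · rw [if_neg hy, if_neg (fun h => hy (injective_of_snoc_injective h))]
    calc ∑ p ∈ D, (if Function.Injective p.1 then (∏ k, g (p.1 k)) * g p.2 else 0)
        = ∑ p ∈ D, (if Function.Injective (Fin.snoc p.1 p.2 : Fin (l+1) → α)
            then ∏ k, g ((Fin.snoc p.1 p.2 : Fin (l+1) → α) k) else 0) := Finset.sum_congr rfl heq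
      _ = ∑ z ∈ D.image (fun p : Σ _ : Fin l → α, α => (Fin.snoc p.1 p.2 : Fin (l+1) → α)),
            (if Function.Injective z then ∏ k, g (z k) else 0) := by
            rw [Finset.sum_image]
            intro a ha b hb h
            exact hinj (Finset.mem_coe.2 ha) (Finset.mem_coe.2 hb) h
      _ ≤ Pinj V g (l + 1) := by
          rw [Pinj]
          refine Finset.sum_le_sum_of_subset_of_nonneg ?_ ?_
          · intro z hz
            rw [Finset.mem_image] at hz
            obtain ⟨⟨y, x⟩, hp, rfl⟩ := hz
            obtain ⟨hy, hx, -⟩ := hmem _ hp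
            rw [Fintype.mem_piFinset]
            intro k
            rcases Fin.eq_castSucc_or_eq_last k with ⟨k', rfl⟩ | rfl
            · rw [Fin.snoc_castSucc]
              exact (Fintype.mem_piFinset.1 hy) k'
            · simpa [Fin.snoc_last] using hx
          · intro z _ _
            split
            · exact Finset.prod_nonneg fun k _ => hg _
            · exact le_rfl
  have hT2 : (∑ y ∈ piF, ∑ x ∈ V.filter (fun x => ¬ (x ∉ Finset.image y Finset.univ)),
      (if Function.Injective y then (∏ k, g (y k)) * g x else 0))
      ≤ (l : ℝ) * M * Pinj V g l := by
    rw [Pinj, Finset.mul_sum]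
    refine Finset.sum_le_sum fun y _ => ?_
    by_cases hy : Function.Injective y
    · simp only [if_pos hy]
      have hprod : 0 ≤ ∏ k, g (y k) := Finset.prod_nonneg fun k _ => hg _
      have hsum : ∑ x ∈ V.filter (fun x => ¬ (x ∉ Finset.image y Finset.univ)), g x
          ≤ (l : ℝ) * M := by
        calc ∑ x ∈ V.filter (fun x => ¬ (x ∉ Finset.image y Finset.univ)), g x
            ≤ (V.filter (fun x => ¬ (x ∉ Finset.image y Finset.univ))).card • M :=
              Finset.sum_le_card_nsmul _ _ _ fun x hx => hM x (Finset.mem_filter.1 hx).1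
          _ ≤ (l : ℝ) * M := by
              rw [nsmul_eq_mul]
              refine mul_le_mul_of_nonneg_right ?_ hM0
              have h1 : (V.filter (fun x => ¬ (x ∉ Finset.image y Finset.univ))).card
                  ≤ (Finset.image y Finset.univ).card :=
                Finset.card_le_card fun x hx => not_not.1 (Finset.mem_filter.1 hx).2
              have h2 : (Finset.image y Finset.univ).card ≤ l := by
                calc (Finset.image y Finset.univ).card ≤ (Finset.univ : Finset (Fin l)).card :=
                    Finset.card_image_le
                  _ = l := by simp
              exact_mod_cast h1.trans h2
      calc ∑ x ∈ V.filter (fun x => ¬ (x ∉ Finset.image y Finset.univ)), (∏ k, g (y k)) * g x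
          = (∏ k, g (y k)) * ∑ x ∈ V.filter (fun x => ¬ (x ∉ Finset.image y Finset.univ)), g x :=
            (Finset.mul_sum _ _ _).symm
        _ ≤ (∏ k, g (y k)) * ((l : ℝ) * M) := mul_le_mul_of_nonneg_left hsum hprod
        _ = (l : ℝ) * M * (∏ k, g (y k)) := by ring
    · simp only [if_neg hy]
      simp
  linarith

lemma claimB (V : Finset α) (g : α → ℝ) (M : ℝ)
    (hg : ∀ x, 0 ≤ g x) (hM : ∀ x ∈ V, g x ≤ M) (hM0 : 0 ≤ M) :
    ∀ m : ℕ, 1 ≤ m →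
      (∑ x ∈ V, g x) ^ m ≤
        ∑ l ∈ Finset.range (m + 1), (m.choose l : ℝ) * ((l : ℝ) * M) ^ (m - l) * Pinj V g l := by
  intro m hm
  induction m, hm using Nat.le_induction with
  | base =>
    rw [pow_one, ← Pinj_one V g]
    rw [Finset.sum_range_succ, Finset.sum_range_one]
    norm_num
  | succ m hm ih =>
    have hX : 0 ≤ ∑ x ∈ V, g x := Finset.sum_nonneg fun x _ => hg x
    have hP : ∀ l, 0 ≤ Pinj V g l := fun l => Pinj_nonneg hg l
    set F : ℕ → ℝ := fun l => (m.choose l : ℝ) * ((l : ℝ) * M) ^ (m - l)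
      * ((l : ℝ) * M * Pinj V g l) with hF
    set C' : ℕ → ℝ := fun l => ((m + 1).choose l : ℝ) * ((l : ℝ) * M) ^ (m + 1 - l)
      * Pinj V g l with hC'
    have hsecond : ∑ l ∈ Finset.range (m + 1), F l = ∑ l ∈ Finset.range (m + 1), F (l + 1) := by
      have h1 := Finset.sum_range_succ F (m + 1)
      have h2 := Finset.sum_range_succ' F (m + 1)
      have hFm : F (m + 1) = 0 := by simp [hF, Nat.choose_succ_self]
      have hF0 : F 0 = 0 := by simp [hF]
      rw [hFm, add_zero] at h1
      rw [hF0, add_zero] at h2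
      rw [← h1, h2]
    have hR : ∑ l ∈ Finset.range (m + 1 + 1), C' l = ∑ l ∈ Finset.range (m + 1), C' (l + 1) := by
      have h2 := Finset.sum_range_succ' C' (m + 1)
      have hC0 : C' 0 = 0 := by simp [hC', zero_pow]
      rw [hC0, add_zero] at h2
      exact h2
    calc (∑ x ∈ V, g x) ^ (m + 1) = (∑ x ∈ V, g x) ^ m * (∑ x ∈ V, g x) := by ring
      _ ≤ (∑ l ∈ Finset.range (m + 1), (m.choose l : ℝ) * ((l : ℝ) * M) ^ (m - l) * Pinj V g l)
          * (∑ x ∈ V, g x) := mul_le_mul_of_nonneg_right ih hX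
      _ = ∑ l ∈ Finset.range (m + 1), (m.choose l : ℝ) * ((l : ℝ) * M) ^ (m - l)
          * ((∑ x ∈ V, g x) * Pinj V g l) := by
          rw [Finset.sum_mul]; exact Finset.sum_congr rfl fun l _ => by ring
      _ ≤ ∑ l ∈ Finset.range (m + 1), (m.choose l : ℝ) * ((l : ℝ) * M) ^ (m - l)
          * (Pinj V g (l + 1) + (l : ℝ) * M * Pinj V g l) := by
          refine Finset.sum_le_sum fun l _ => ?_
          refine mul_le_mul_of_nonneg_left (Pinj_step V g M l hg hM hM0) ?_
          positivity
      _ = ∑ l ∈ Finset.range (m + 1),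
            ((m.choose l : ℝ) * ((l : ℝ) * M) ^ (m - l) * Pinj V g (l + 1) + F l) := by
          refine Finset.sum_congr rfl fun l _ => ?_
          rw [hF]; ring
      _ = ∑ l ∈ Finset.range (m + 1), (m.choose l : ℝ) * ((l : ℝ) * M) ^ (m - l) * Pinj V g (l+1)
          + ∑ l ∈ Finset.range (m + 1), F l := Finset.sum_add_distrib
      _ ≤ ∑ l ∈ Finset.range (m + 1 + 1), C' l := by
          rw [hsecond, hR, ← Finset.sum_add_distrib]
          refine Finset.sum_le_sum fun l hl => ?_
          have hl' : l ≤ m := Nat.lt_succ_iff.1 (Finset.mem_range.1 hl)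
          have hPnn := hP (l + 1)
          rw [hF, hC']
          rcases eq_or_lt_of_le hl' with rfl | hlt
          · simp [Nat.choose_succ_self, Nat.choose_self, Nat.sub_self]
          · have hml : m - l = (m - (l + 1)) + 1 := by omega
            have e2 : (m + 1 - (l + 1)) = m - l := by omega
            have key : (m.choose l : ℝ) * ((l : ℝ) * M) ^ (m - l)
                + (m.choose (l+1) : ℝ) * (((l+1 : ℕ) : ℝ) * M) ^ (m - (l+1))
                  * (((l+1 : ℕ) : ℝ) * M)
                ≤ (((m+1 : ℕ).choose (l+1)) : ℝ) * (((l+1 : ℕ) : ℝ) * M) ^ (m + 1 - (l+1)) := by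
              have e1 : (((l+1 : ℕ) : ℝ) * M) ^ (m - (l+1)) * (((l+1 : ℕ) : ℝ) * M)
                  = (((l+1 : ℕ) : ℝ) * M) ^ (m - l) := by
                rw [hml, pow_succ]
              rw [e2]
              have hle : ((l : ℝ) * M) ^ (m - l) ≤ (((l+1 : ℕ) : ℝ) * M) ^ (m - l) := by
                refine pow_le_pow_left₀ (by positivity) ?_ _
                refine mul_le_mul_of_nonneg_right ?_ hM0
                push_cast; linarith
              have hch : ((m+1 : ℕ).choose (l+1) : ℝ)
                  = (m.choose l : ℝ) + (m.choose (l+1) : ℝ) := by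
                rw [← Nat.cast_add, ← Nat.choose_succ_succ]
              rw [hch, add_mul, mul_assoc, e1]
              refine add_le_add ?_ le_rfl
              exact mul_le_mul_of_nonneg_left hle (by positivity)
            calc (m.choose l : ℝ) * ((l : ℝ) * M) ^ (m - l) * Pinj V g (l + 1)
                + (m.choose (l+1) : ℝ) * (((l+1 : ℕ) : ℝ) * M) ^ (m - (l+1))
                  * (((l+1 : ℕ) : ℝ) * M * Pinj V g (l+1))
                = ((m.choose l : ℝ) * ((l : ℝ) * M) ^ (m - l)
                  + (m.choose (l+1) : ℝ) * (((l+1 : ℕ) : ℝ) * M) ^ (m - (l+1))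
                    * (((l+1 : ℕ) : ℝ) * M)) * Pinj V g (l + 1) := by ring
              _ ≤ (((m+1 : ℕ).choose (l+1)) : ℝ) * (((l+1 : ℕ) : ℝ) * M) ^ (m + 1 - (l+1))
                  * Pinj V g (l + 1) := mul_le_mul_of_nonneg_right key hPnn


noncomputable def hfun {Ω β : Type*} [DecidableEq β] (E : Set Ω) (G : Ω → β → ℝ)
    (l : ℕ) (y : Fin l → β) (ω : Ω) : ℝ :=
  if Function.Injective y then E.indicator (fun ω' => ∏ k, G ω' (y k)) ω else 0

end TSILT
open MeasureTheory ProbabilityTheory Filter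

open TSILT in
/-- **Upper bound on moments of the truncated self-intersection local time
(Proposition 2.1, inequality (2.9)):**
`E[Q̃_n^m] ≤ Σ_{l=1}^m binom(m,l) (l K²/2)^{m−l} A_l(n)`. -/
theorem truncated_self_intersection_moment_upper_bound
    {Ω : Type*} [MeasurableSpace Ω] (μ : Measure Ω) [IsProbabilityMeasure μ]
    (d : ℕ) (hd : 1 ≤ d)
    (X : ℕ → Ω → (Fin d → ℤ))
    (hXmeas : ∀ i, Measurable (X i))
    (hXindep : iIndepFun X μ)
    (hXident : ∀ i, Measure.map (X i) μ = Measure.map (X 1) μ)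
    (hXsymm : Measure.map (X 1) μ = Measure.map (fun ω => -(X 1 ω)) μ)
    (hXsupp : AddSubgroup.closure {x : Fin d → ℤ | μ {ω | X 1 ω = x} ≠ 0} = ⊤)
    (hXmom : ∀ a b : Fin d, Integrable (fun ω => ((X 1 ω a : ℝ) * (X 1 ω b : ℝ))) μ)
    (S : ℕ → Ω → (Fin d → ℤ)) (hS : ∀ n ω, S n ω = ∑ i ∈ Finset.range n, X (i + 1) ω)
    (Q : ℕ → Ω → ℝ)
    (hQ : ∀ n ω, Q n ω = ∑ j ∈ Finset.Icc 1 n, ∑ k ∈ Finset.Icc 1 n,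
        if j < k ∧ S j ω = S k ω then (1 : ℝ) else 0)
    (lt : ℕ → (Fin d → ℤ) → Ω → ℕ)
    (hlt : ∀ n x ω, lt n x ω = ((Finset.Icc 1 n).filter (fun k => S k ω = x)).card)
    (Qt : ℕ → ℝ → Ω → ℝ)
    (hQt : ∀ n K, Qt n K = Set.indicator {ω | ∀ x, (lt n x ω : ℝ) ≤ K} (Q n))
    (A : ℕ → ℕ → ℝ → ℝ)
    (hA : ∀ m n K, A m n K = (2 : ℝ)⁻¹ ^ m * ∑' y : Fin m → (Fin d → ℤ),
      Set.indicator {y : Fin m → (Fin d → ℤ) | Function.Injective y}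
        (fun y => ∫ ω, Set.indicator {ω' | ∀ x, (lt n x ω' : ℝ) ≤ K}
          (fun ω' => ∏ k : Fin m, ((lt n (y k) ω' : ℝ) * ((lt n (y k) ω' : ℝ) - 1))) ω ∂μ) y) :
    ∀ m n : ℕ, 1 ≤ m → 1 ≤ n → ∀ K : ℝ, 0 < K →
      ∫ ω, (Qt n K ω) ^ m ∂μ ≤
        ∑ l ∈ Finset.Icc 1 m, (m.choose l : ℝ) * ((l : ℝ) * K ^ 2 / 2) ^ (m - l) * A l n K := by
  classical
  intro m n hm hn K hK
  -- notation
  set E : Set Ω := {ω | ∀ x, (lt n x ω : ℝ) ≤ K} with hE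
  set G : Ω → (Fin d → ℤ) → ℝ := fun ω x => (lt n x ω : ℝ) * ((lt n x ω : ℝ) - 1) with hG
  set V : Ω → Finset (Fin d → ℤ) := fun ω => (Finset.Icc 1 n).image (fun k => S k ω) with hV
  set c : ℕ → ℝ := fun l => (m.choose l : ℝ) * ((l : ℝ) * K ^ 2 / 2) ^ (m - l) with hc
  -- measurability of S
  have hSmeas : ∀ k, Measurable (S k) := by
    intro k
    have : S k = fun ω => ∑ i ∈ Finset.range k, X (i + 1) ω := funext fun ω => hS k ω
    rw [this]
    exact Finset.measurable_sum _ fun i _ => hXmeas (i + 1)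
  -- local time as a sum of indicators
  have hltsum : ∀ x ω, (lt n x ω : ℝ)
      = ∑ k ∈ Finset.Icc 1 n, if S k ω = x then (1 : ℝ) else 0 := by
    intro x ω
    rw [hlt, Finset.card_filter, Nat.cast_sum]
    simp only [Nat.cast_ite, Nat.cast_one, Nat.cast_zero]
  have hltmeas : ∀ x, Measurable (fun ω => (lt n x ω : ℝ)) := by
    intro x
    have : (fun ω => (lt n x ω : ℝ))
        = fun ω => ∑ k ∈ Finset.Icc 1 n, if S k ω = x then (1 : ℝ) else 0 :=
      funext fun ω => hltsum x ω
    rw [this]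
    refine Finset.measurable_sum _ fun k _ => Measurable.ite ?_ measurable_const measurable_const
    exact (hSmeas k) (MeasurableSet.singleton x)
  have hEmeas : MeasurableSet E := by
    rw [hE, Set.setOf_forall]
    exact MeasurableSet.iInter fun x => measurableSet_le (hltmeas x) measurable_const
  have hQmeas : Measurable (Q n) := by
    have : Q n = fun ω => ∑ j ∈ Finset.Icc 1 n, ∑ k ∈ Finset.Icc 1 n,
        if j < k ∧ S j ω = S k ω then (1 : ℝ) else 0 := funext fun ω => hQ n ω
    rw [this]
    refine Finset.measurable_sum _ fun j _ => Finset.measurable_sum _ fun k _ => ?_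
    refine Measurable.ite ?_ measurable_const measurable_const
    have : {ω | j < k ∧ S j ω = S k ω}
        = (fun ω => (S j ω, S k ω)) ⁻¹' {p | j < k ∧ p.1 = p.2} := rfl
    rw [this]
    exact ((hSmeas j).prodMk (hSmeas k)) ((Set.to_countable _).measurableSet)
  have hQnonneg : ∀ ω, 0 ≤ Q n ω := by
    intro ω
    rw [hQ]
    refine Finset.sum_nonneg fun j _ => Finset.sum_nonneg fun k _ => ?_
    split <;> norm_num
  -- bounds on lt and G
  have hltn : ∀ x ω, (lt n x ω : ℝ) ≤ (n : ℝ) := by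
    intro x ω
    rw [hlt]
    have h1 : ((Finset.Icc 1 n).filter (fun k => S k ω = x)).card ≤ (Finset.Icc 1 n).card :=
      Finset.card_filter_le _ _
    have h2 : (Finset.Icc 1 n).card = n := by rw [Nat.card_Icc]; omega
    exact_mod_cast h2 ▸ h1
  have hltnn : ∀ x ω, (0 : ℝ) ≤ (lt n x ω : ℝ) := fun x ω => Nat.cast_nonneg _
  have hGnn : ∀ ω x, 0 ≤ G ω x := by
    intro ω x
    simp only [hG]
    rcases Nat.eq_zero_or_pos (lt n x ω) with h | h
    · simp [h]
    · have h1 : (1 : ℝ) ≤ (lt n x ω : ℝ) := by exact_mod_cast h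
      nlinarith
  have hGbound : ∀ ω x, G ω x ≤ (n : ℝ) ^ 2 := by
    intro ω x
    have h1 := hltn x ω
    have h2 := hltnn x ω
    simp only [hG]
    nlinarith
  have hGK : ∀ ω, ω ∈ E → ∀ x, G ω x ≤ K ^ 2 := by
    intro ω hω x
    have h1 : (lt n x ω : ℝ) ≤ K := hω x
    have h2 := hltnn x ω
    simp only [hG]
    nlinarith
  have hGsupp : ∀ ω x, x ∉ V ω → G ω x = 0 := by
    intro ω x hx
    have : lt n x ω = 0 := by
      rw [hlt]
      rw [Finset.card_eq_zero, Finset.filter_eq_empty_iff]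
      intro k hk hSk
      exact hx (Finset.mem_image.2 ⟨k, hk, hSk⟩)
    simp only [hG, this]
    norm_num
  -- the key identity 2Q = ∑_{x ∈ V} G
  have hiden : ∀ ω, 2 * Q n ω = ∑ x ∈ V ω, G ω x := by
    intro ω
    have hcardJ : ((Finset.Icc 1 n).card : ℝ) = (n : ℝ) := by
      rw [Nat.card_Icc]; simp
    have hmemV : ∀ k ∈ Finset.Icc 1 n, S k ω ∈ V ω :=
      fun k hk => Finset.mem_image.2 ⟨k, hk, rfl⟩
    have hA2 : ∑ x ∈ V ω, (lt n x ω : ℝ) ^ 2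
        = ∑ j ∈ Finset.Icc 1 n, ∑ k ∈ Finset.Icc 1 n,
            if S j ω = S k ω then (1 : ℝ) else 0 := by
      have step1 : ∀ x, (lt n x ω : ℝ) ^ 2 = ∑ j ∈ Finset.Icc 1 n, ∑ k ∈ Finset.Icc 1 n,
          ((if S j ω = x then (1 : ℝ) else 0) * (if S k ω = x then (1 : ℝ) else 0)) := by
        intro x
        rw [sq, hltsum x ω, Finset.sum_mul_sum]
      rw [Finset.sum_congr rfl fun x _ => step1 x, Finset.sum_comm]
      refine Finset.sum_congr rfl fun j hj => ?_
      rw [Finset.sum_comm]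
      refine Finset.sum_congr rfl fun k hk => ?_
      rw [Finset.sum_eq_single (S j ω)]
      · rw [if_pos rfl, one_mul]
        exact if_congr eq_comm rfl rfl
      · intro b _ hb
        rw [if_neg (fun h => hb h.symm), zero_mul]
      · intro hnot
        exact absurd (hmemV j hj) hnot
    have hB2 : ∑ x ∈ V ω, (lt n x ω : ℝ) = (n : ℝ) := by
      rw [Finset.sum_congr rfl fun x _ => hltsum x ω, Finset.sum_comm]
      have inner : ∀ k ∈ Finset.Icc 1 n,
          ∑ x ∈ V ω, (if S k ω = x then (1 : ℝ) else 0) = 1 := by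
        intro k hk
        rw [Finset.sum_ite_eq (V ω) (S k ω) (fun _ => (1 : ℝ)), if_pos (hmemV k hk)]
      rw [Finset.sum_congr rfl inner, Finset.sum_const, nsmul_eq_mul, mul_one, hcardJ]
    have hdiag : ∑ j ∈ Finset.Icc 1 n, ∑ k ∈ Finset.Icc 1 n,
        (if j = k ∧ S j ω = S k ω then (1 : ℝ) else 0) = (n : ℝ) := by
      have inner : ∀ j ∈ Finset.Icc 1 n, ∑ k ∈ Finset.Icc 1 n,
          (if j = k ∧ S j ω = S k ω then (1 : ℝ) else 0) = 1 := by
        intro j hj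
        rw [Finset.sum_eq_single j]
        · rw [if_pos ⟨rfl, rfl⟩]
        · intro b _ hb
          exact if_neg (fun hc => hb hc.1.symm)
        · intro hj'
          exact absurd hj hj'
      rw [Finset.sum_congr rfl inner, Finset.sum_const, nsmul_eq_mul, mul_one, hcardJ]
    have hsplit : ∑ j ∈ Finset.Icc 1 n, ∑ k ∈ Finset.Icc 1 n,
        (if S j ω = S k ω then (1 : ℝ) else 0)
        = (∑ j ∈ Finset.Icc 1 n, ∑ k ∈ Finset.Icc 1 n,
            if j ≠ k ∧ S j ω = S k ω then (1 : ℝ) else 0)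
          + ∑ j ∈ Finset.Icc 1 n, ∑ k ∈ Finset.Icc 1 n,
            (if j = k ∧ S j ω = S k ω then (1 : ℝ) else 0) := by
      rw [← Finset.sum_add_distrib]
      refine Finset.sum_congr rfl fun j _ => ?_
      rw [← Finset.sum_add_distrib]
      refine Finset.sum_congr rfl fun k _ => ?_
      by_cases hjk : j = k
      · subst hjk; simp
      · by_cases he : S j ω = S k ω <;> simp [hjk, he]
    have q2 : Q n ω = ∑ j ∈ Finset.Icc 1 n, ∑ k ∈ Finset.Icc 1 n,
        if k < j ∧ S k ω = S j ω then (1 : ℝ) else 0 := by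
      rw [hQ n ω]
      exact Finset.sum_comm
    have h2Q : 2 * Q n ω = ∑ j ∈ Finset.Icc 1 n, ∑ k ∈ Finset.Icc 1 n,
        if j ≠ k ∧ S j ω = S k ω then (1 : ℝ) else 0 := by
      rw [two_mul]
      nth_rewrite 1 [hQ n ω]
      rw [q2, ← Finset.sum_add_distrib]
      refine Finset.sum_congr rfl fun j _ => ?_
      rw [← Finset.sum_add_distrib]
      refine Finset.sum_congr rfl fun k _ => ?_
      by_cases he : S j ω = S k ω
      · rcases lt_trichotomy j k with h | h | h
        · rw [if_pos ⟨h, he⟩, if_neg (fun hc => absurd hc.1 (by omega)),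
            if_pos ⟨(by omega : j ≠ k), he⟩]
          norm_num
        · subst h
          simp
        · rw [if_neg (fun hc => absurd hc.1 (by omega)), if_pos ⟨h, he.symm⟩,
            if_pos ⟨(by omega : j ≠ k), he⟩]
          norm_num
      · rw [if_neg (fun hc => he hc.2), if_neg (fun hc => he hc.2.symm),
          if_neg (fun hc => he hc.2)]
        norm_num
    have hGsum : ∑ x ∈ V ω, G ω x
        = (∑ x ∈ V ω, (lt n x ω : ℝ) ^ 2) - ∑ x ∈ V ω, (lt n x ω : ℝ) := by
      rw [← Finset.sum_sub_distrib]
      refine Finset.sum_congr rfl fun x _ => ?_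
      simp only [hG]; ring
    linarith [h2Q, hsplit, hA2, hB2, hGsum, hdiag]
  -- pointwise description of the tsum of hfun
  have hsuppfin : ∀ (l : ℕ) ω (y : Fin l → (Fin d → ℤ)),
      y ∉ Fintype.piFinset (fun _ : Fin l => V ω) → hfun E G l y ω = 0 := by
    intro l ω y hy
    rw [Fintype.mem_piFinset] at hy
    push_neg at hy
    obtain ⟨k, hk⟩ := hy
    have hzero : (∏ j, G ω (y j)) = 0 :=
      Finset.prod_eq_zero (Finset.mem_univ k) (hGsupp ω (y k) hk)
    simp only [hfun]
    split
    · by_cases hω : ω ∈ E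
      · rw [Set.indicator_of_mem hω, hzero]
      · rw [Set.indicator_of_notMem hω]
    · rfl
  have hsummable : ∀ (l : ℕ) ω, Summable (fun y : Fin l → (Fin d → ℤ) => hfun E G l y ω) :=
    fun l ω => summable_of_ne_finset_zero (hsuppfin l ω)
  have htsum : ∀ (l : ℕ) ω, (∑' y : Fin l → (Fin d → ℤ), hfun E G l y ω)
      = if ω ∈ E then Pinj (V ω) (G ω) l else 0 := by
    intro l ω
    rw [tsum_eq_sum (hsuppfin l ω)]
    by_cases hω : ω ∈ E
    · rw [if_pos hω, Pinj]
      refine Finset.sum_congr rfl fun y _ => ?_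
      simp only [hfun]
      split
      · rw [Set.indicator_of_mem hω]
      · rfl
    · rw [if_neg hω]
      refine Finset.sum_eq_zero fun y _ => ?_
      simp only [hfun]
      split
      · rw [Set.indicator_of_notMem hω]
      · rfl
  have hfunnn : ∀ (l : ℕ) (y : Fin l → (Fin d → ℤ)) ω, 0 ≤ hfun E G l y ω := by
    intro l y ω
    simp only [hfun]
    split
    · exact Set.indicator_nonneg (fun ω' _ => Finset.prod_nonneg fun k _ => hGnn ω' (y k)) ω
    · exact le_rfl
  have hPinjbound : ∀ (l : ℕ) ω, Pinj (V ω) (G ω) l ≤ ((n : ℝ) ^ 3) ^ l := by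
    intro l ω
    have h1 : Pinj (V ω) (G ω) l
        ≤ ∑ y ∈ Fintype.piFinset (fun _ : Fin l => V ω), ∏ k, G ω (y k) := by
      unfold Pinj
      refine Finset.sum_le_sum fun y _ => ?_
      split
      · exact le_rfl
      · exact Finset.prod_nonneg fun k _ => hGnn ω (y k)
    have h2 : ∑ y ∈ Fintype.piFinset (fun _ : Fin l => V ω), ∏ k, G ω (y k)
        = (∑ x ∈ V ω, G ω x) ^ l := by
      rw [← Finset.prod_univ_sum]
      rw [Finset.prod_const]
      simp
    have h3 : ∑ x ∈ V ω, G ω x ≤ (n : ℝ) ^ 3 := by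
      calc ∑ x ∈ V ω, G ω x ≤ (V ω).card • ((n : ℝ) ^ 2) :=
            Finset.sum_le_card_nsmul _ _ _ fun x _ => hGbound ω x
        _ ≤ (n : ℝ) * (n : ℝ) ^ 2 := by
            rw [nsmul_eq_mul]
            refine mul_le_mul_of_nonneg_right ?_ (by positivity)
            have hc1 : (V ω).card ≤ (Finset.Icc 1 n).card := Finset.card_image_le
            have hc2 : (Finset.Icc 1 n).card = n := by rw [Nat.card_Icc]; omega
            exact_mod_cast hc2 ▸ hc1
        _ = (n : ℝ) ^ 3 := by ring
    have h4 : (∑ x ∈ V ω, G ω x) ^ l ≤ ((n : ℝ) ^ 3) ^ l :=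
      pow_le_pow_left₀ (Finset.sum_nonneg fun x _ => hGnn ω x) h3 l
    exact (h1.trans_eq h2).trans h4
  have htsumbound : ∀ (l : ℕ) ω,
      (∑' y : Fin l → (Fin d → ℤ), hfun E G l y ω) ≤ ((n : ℝ) ^ 3) ^ l := by
    intro l ω
    rw [htsum l ω]
    split
    · exact hPinjbound l ω
    · positivity
  have hfunmeas : ∀ (l : ℕ) (y : Fin l → (Fin d → ℤ)), Measurable (hfun E G l y) := by
    intro l y
    unfold hfun
    by_cases hy : Function.Injective y
    · simp only [if_pos hy]
      refine Measurable.indicator ?_ hEmeas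
      refine Finset.measurable_prod _ fun k _ => ?_
      exact ((hltmeas (y k)).mul ((hltmeas (y k)).sub measurable_const))
    · simp only [if_neg hy]
      exact measurable_const
  have hfunbdd : ∀ (l : ℕ) (y : Fin l → (Fin d → ℤ)) ω,
      hfun E G l y ω ≤ ((n : ℝ) ^ 2) ^ l := by
    intro l y ω
    simp only [hfun]
    split
    · refine Set.indicator_apply_le' (fun _ => ?_) (fun _ => by positivity)
      calc (∏ k, G ω (y k)) ≤ ∏ _k : Fin l, (n : ℝ) ^ 2 :=
            Finset.prod_le_prod (fun k _ => hGnn ω (y k)) (fun k _ => hGbound ω (y k))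
        _ = ((n : ℝ) ^ 2) ^ l := by rw [Finset.prod_const]; simp
    · positivity
  have hfunint : ∀ (l : ℕ) (y : Fin l → (Fin d → ℤ)), Integrable (hfun E G l y) μ := by
    intro l y
    refine (integrable_const (((n : ℝ) ^ 2) ^ l)).mono' (hfunmeas l y).aestronglyMeasurable ?_
    refine ae_of_all _ fun ω => ?_
    rw [Real.norm_eq_abs, abs_of_nonneg (hfunnn l y ω)]
    exact hfunbdd l y ω
  -- rewrite A in terms of hfun
  have hA' : ∀ l : ℕ, A l n K = (2 : ℝ)⁻¹ ^ l * ∑' y : Fin l → (Fin d → ℤ),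
      ∫ ω, hfun E G l y ω ∂μ := by
    intro l
    rw [hA]
    congr 1
    refine tsum_congr fun y => ?_
    by_cases hy : Function.Injective y
    · rw [Set.indicator_of_mem (by exact hy)]
      refine integral_congr_ae (ae_of_all _ fun ω => ?_)
      simp only [hfun, if_pos hy]
      rfl
    · rw [Set.indicator_of_notMem (by exact hy)]
      symm
      have : (fun ω => hfun E G l y ω) = fun _ => (0:ℝ) := by
        funext ω; simp only [hfun, if_neg hy]
      rw [this, integral_zero]
  have hcnn : ∀ l, 0 ≤ c l := by
    intro l
    simp only [hc]
    positivity
  -- pointwise master inequality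
  have hmaster : ∀ ω, (Qt n K ω) ^ m
      ≤ ∑ l ∈ Finset.Icc 1 m, c l * ((2 : ℝ)⁻¹ ^ l * ∑' y : Fin l → (Fin d → ℤ), hfun E G l y ω) := by
    intro ω
    by_cases hω : ω ∈ E
    · have hQt' : Qt n K ω = Q n ω := by rw [hQt]; exact Set.indicator_of_mem hω _
      have hQhalf : Q n ω = 2⁻¹ * ∑ x ∈ V ω, G ω x := by
        have := hiden ω; linarith
      rw [hQt', hQhalf, mul_pow]
      have hclaim := claimB (V ω) (G ω) (K ^ 2) (hGnn ω) (fun x _ => hGK ω hω x)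
        (by positivity) m hm
      calc (2 : ℝ)⁻¹ ^ m * (∑ x ∈ V ω, G ω x) ^ m
          ≤ (2 : ℝ)⁻¹ ^ m * ∑ l ∈ Finset.range (m + 1),
            (m.choose l : ℝ) * ((l : ℝ) * K ^ 2) ^ (m - l) * Pinj (V ω) (G ω) l :=
            mul_le_mul_of_nonneg_left hclaim (by positivity)
        _ = ∑ l ∈ Finset.range (m + 1), c l * ((2 : ℝ)⁻¹ ^ l * Pinj (V ω) (G ω) l) := by
            rw [Finset.mul_sum]
            refine Finset.sum_congr rfl fun l hl => ?_
            have hl' : l ≤ m := Nat.lt_succ_iff.1 (Finset.mem_range.1 hl)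
            have h2 : (2 : ℝ)⁻¹ ^ m = (2 : ℝ)⁻¹ ^ (m - l) * (2 : ℝ)⁻¹ ^ l := by
              rw [← pow_add]
              congr 1
              omega
            simp only [hc]
            rw [h2]
            ring
        _ = ∑ l ∈ Finset.Icc 1 m, c l * ((2 : ℝ)⁻¹ ^ l * Pinj (V ω) (G ω) l) := by
            have hins : Finset.range (m + 1) = insert 0 (Finset.Icc 1 m) := by
              ext a
              simp only [Finset.mem_range, Finset.mem_insert, Finset.mem_Icc]
              omega
            rw [hins, Finset.sum_insert (by simp)]
            have hc0 : c 0 = 0 := by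
              simp only [hc]
              norm_num [zero_pow (show m ≠ 0 by omega)]
            rw [hc0, zero_mul, zero_add]
        _ = ∑ l ∈ Finset.Icc 1 m, c l
            * ((2 : ℝ)⁻¹ ^ l * ∑' y : Fin l → (Fin d → ℤ), hfun E G l y ω) := by
            refine Finset.sum_congr rfl fun l _ => ?_
            rw [htsum l ω, if_pos hω]
    · have hQt' : Qt n K ω = 0 := by rw [hQt]; exact Set.indicator_of_notMem hω _
      rw [hQt', zero_pow (by omega : m ≠ 0)]
      refine Finset.sum_nonneg fun l _ => mul_nonneg (hcnn l)
        (mul_nonneg (by positivity) (tsum_nonneg fun y => hfunnn l y ω))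
  -- nonnegativity facts
  have hQtnn : ∀ ω, 0 ≤ (Qt n K ω) ^ m := by
    intro ω
    refine pow_nonneg ?_ m
    rw [hQt]
    exact Set.indicator_nonneg (fun ω' _ => hQnonneg ω') ω
  have hQtmeas : Measurable (Qt n K) := by
    rw [hQt]; exact hQmeas.indicator hEmeas
  have hInn : ∀ (l : ℕ) (y : Fin l → (Fin d → ℤ)), 0 ≤ ∫ ω, hfun E G l y ω ∂μ :=
    fun l y => integral_nonneg (hfunnn l y)
  -- ENNReal chain
  have hofmeas : ∀ (l : ℕ) (y : Fin l → (Fin d → ℤ)),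
      Measurable (fun ω => ENNReal.ofReal (hfun E G l y ω)) :=
    fun l y => (hfunmeas l y).ennreal_ofReal
  have hL : ∫ ω, (Qt n K ω) ^ m ∂μ
      = (∫⁻ ω, ENNReal.ofReal ((Qt n K ω) ^ m) ∂μ).toReal :=
    integral_eq_lintegral_of_nonneg_ae (ae_of_all _ hQtnn)
      ((hQtmeas.pow_const m).aestronglyMeasurable)
  have hpt : ∀ ω, ENNReal.ofReal ((Qt n K ω) ^ m)
      ≤ ∑ l ∈ Finset.Icc 1 m, ENNReal.ofReal (c l * (2 : ℝ)⁻¹ ^ l)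
          * ∑' y : Fin l → (Fin d → ℤ), ENNReal.ofReal (hfun E G l y ω) := by
    intro ω
    calc ENNReal.ofReal ((Qt n K ω) ^ m)
        ≤ ENNReal.ofReal (∑ l ∈ Finset.Icc 1 m,
            c l * ((2 : ℝ)⁻¹ ^ l * ∑' y : Fin l → (Fin d → ℤ), hfun E G l y ω)) :=
          ENNReal.ofReal_le_ofReal (hmaster ω)
      _ = ∑ l ∈ Finset.Icc 1 m, ENNReal.ofReal
            (c l * ((2 : ℝ)⁻¹ ^ l * ∑' y : Fin l → (Fin d → ℤ), hfun E G l y ω)) :=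
          ENNReal.ofReal_sum_of_nonneg fun l _ => mul_nonneg (hcnn l)
            (mul_nonneg (by positivity) (tsum_nonneg fun y => hfunnn l y ω))
      _ = ∑ l ∈ Finset.Icc 1 m, ENNReal.ofReal (c l * (2 : ℝ)⁻¹ ^ l)
            * ∑' y : Fin l → (Fin d → ℤ), ENNReal.ofReal (hfun E G l y ω) := by
          refine Finset.sum_congr rfl fun l _ => ?_
          rw [show c l * ((2 : ℝ)⁻¹ ^ l * ∑' y : Fin l → (Fin d → ℤ), hfun E G l y ω)
              = (c l * (2 : ℝ)⁻¹ ^ l) * ∑' y : Fin l → (Fin d → ℤ), hfun E G l y ω by ring]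
          rw [ENNReal.ofReal_mul (mul_nonneg (hcnn l) (by positivity))]
          rw [ENNReal.ofReal_tsum_of_nonneg (fun y => hfunnn l y ω) (hsummable l ω)]
  have hlin : ∫⁻ ω, (∑ l ∈ Finset.Icc 1 m, ENNReal.ofReal (c l * (2 : ℝ)⁻¹ ^ l)
        * ∑' y : Fin l → (Fin d → ℤ), ENNReal.ofReal (hfun E G l y ω)) ∂μ
      = ∑ l ∈ Finset.Icc 1 m, ENNReal.ofReal (c l * (2 : ℝ)⁻¹ ^ l)
        * ∑' y : Fin l → (Fin d → ℤ), ∫⁻ ω, ENNReal.ofReal (hfun E G l y ω) ∂μ := by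
    rw [lintegral_finset_sum _ (fun l _ =>
      (Measurable.ennreal_tsum (fun y => hofmeas l y)).const_mul _)]
    refine Finset.sum_congr rfl fun l _ => ?_
    rw [lintegral_const_mul _ (Measurable.ennreal_tsum (fun y => hofmeas l y)),
      lintegral_tsum (fun y => (hofmeas l y).aemeasurable)]
  have hIl : ∀ (l : ℕ) (y : Fin l → (Fin d → ℤ)),
      ∫⁻ ω, ENNReal.ofReal (hfun E G l y ω) ∂μ
        = ENNReal.ofReal (∫ ω, hfun E G l y ω ∂μ) :=
    fun l y => (ofReal_integral_eq_lintegral_ofReal (hfunint l y)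
      (ae_of_all _ (hfunnn l y))).symm
  have hSne : ∀ l : ℕ, (∑' y : Fin l → (Fin d → ℤ),
      ENNReal.ofReal (∫ ω, hfun E G l y ω ∂μ)) ≠ ⊤ := by
    intro l
    have h1 : (∑' y : Fin l → (Fin d → ℤ), ENNReal.ofReal (∫ ω, hfun E G l y ω ∂μ))
        = ∫⁻ ω, ∑' y : Fin l → (Fin d → ℤ), ENNReal.ofReal (hfun E G l y ω) ∂μ := by
      rw [lintegral_tsum (fun y => (hofmeas l y).aemeasurable)]
      exact tsum_congr fun y => (hIl l y).symm
    rw [h1]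
    have h2 : ∫⁻ ω, ∑' y : Fin l → (Fin d → ℤ), ENNReal.ofReal (hfun E G l y ω) ∂μ
        ≤ ENNReal.ofReal (((n : ℝ) ^ 3) ^ l) := by
      calc ∫⁻ ω, ∑' y : Fin l → (Fin d → ℤ), ENNReal.ofReal (hfun E G l y ω) ∂μ
          ≤ ∫⁻ _ω, ENNReal.ofReal (((n : ℝ) ^ 3) ^ l) ∂μ := by
            refine lintegral_mono fun ω => ?_
            rw [← ENNReal.ofReal_tsum_of_nonneg (fun y => hfunnn l y ω) (hsummable l ω)]
            exact ENNReal.ofReal_le_ofReal (htsumbound l ω)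
        _ = ENNReal.ofReal (((n : ℝ) ^ 3) ^ l) := by
            rw [lintegral_const, measure_univ, mul_one]
    exact ne_top_of_le_ne_top ENNReal.ofReal_ne_top h2
  have hsumI : ∀ l : ℕ, Summable (fun y : Fin l → (Fin d → ℤ) => ∫ ω, hfun E G l y ω ∂μ) := by
    intro l
    have h := ENNReal.summable_toReal (hSne l)
    exact h.congr fun y => ENNReal.toReal_ofReal (hInn l y)
  have hAnn : ∀ l : ℕ, 0 ≤ A l n K := by
    intro l
    rw [hA' l]
    exact mul_nonneg (by positivity) (tsum_nonneg (hInn l))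
  have main : ∫⁻ ω, ENNReal.ofReal ((Qt n K ω) ^ m) ∂μ
      ≤ ENNReal.ofReal (∑ l ∈ Finset.Icc 1 m, c l * A l n K) := by
    calc ∫⁻ ω, ENNReal.ofReal ((Qt n K ω) ^ m) ∂μ
        ≤ ∫⁻ ω, (∑ l ∈ Finset.Icc 1 m, ENNReal.ofReal (c l * (2 : ℝ)⁻¹ ^ l)
            * ∑' y : Fin l → (Fin d → ℤ), ENNReal.ofReal (hfun E G l y ω)) ∂μ :=
          lintegral_mono hpt
      _ = ∑ l ∈ Finset.Icc 1 m, ENNReal.ofReal (c l * (2 : ℝ)⁻¹ ^ l)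
            * ∑' y : Fin l → (Fin d → ℤ), ∫⁻ ω, ENNReal.ofReal (hfun E G l y ω) ∂μ := hlin
      _ = ∑ l ∈ Finset.Icc 1 m, ENNReal.ofReal (c l * (2 : ℝ)⁻¹ ^ l)
            * ∑' y : Fin l → (Fin d → ℤ), ENNReal.ofReal (∫ ω, hfun E G l y ω ∂μ) := by
          refine Finset.sum_congr rfl fun l _ => ?_
          rw [tsum_congr (fun y => hIl l y)]
      _ = ∑ l ∈ Finset.Icc 1 m, ENNReal.ofReal (c l * A l n K) := by
          refine Finset.sum_congr rfl fun l _ => ?_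
          rw [← ENNReal.ofReal_tsum_of_nonneg (hInn l) (hsumI l),
            ← ENNReal.ofReal_mul (mul_nonneg (hcnn l) (by positivity)), hA' l]
          congr 1
          ring
      _ = ENNReal.ofReal (∑ l ∈ Finset.Icc 1 m, c l * A l n K) :=
          (ENNReal.ofReal_sum_of_nonneg fun l _ => mul_nonneg (hcnn l) (hAnn l)).symm
  rw [hL]
  refine ENNReal.toReal_le_of_le_ofReal
    (Finset.sum_nonneg fun l _ => ?_) ?_
  · exact mul_nonneg (mul_nonneg (by positivity) (by positivity)) (hAnn l)
  · exact main
end
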